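/- arXiv:1804.00176 — 4 statements merged into one kernel-verified Lean document; each statement's English description precedes it below -/
import Mathlib

section
/- Let A₀ ∈ ℂ \ {0} and let h be a bounded holomorphic function on a punctured neighborhood of c₁ (with |h(c)| ≤ C for some constant C). Fix a branch of the square root. Define c(n) := −(2π/(A₀ n))² and r_n := |c(n)|^{1+β} for a fixed small β ∈ (0, 1/2). Then for all sufficiently large n, on the circle |c − (c₁ + c(n))| = r_n one has | −2πi/(A₀ √(c − c₁)) + n | ≥ C' n^{1−2β} for some constant C' > 0; in particular this quantity exceeds |h(c)| for large n, so by Rouché's theorem the equation −2πi/(A₀√(c−c₁)) + n + h(c) = 0 has exactly one solution in the disk D(c₁ + c(n), r_n). -/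
open Filter Metric

lemma branchA (U : Set ℂ) (hU : IsOpen U) (sq : ℂ → ℂ)
    (hsqc : ∀ c ∈ U, ContinuousAt sq c)
    (c₁ s : ℂ) (r : ℝ) (hr : 0 < r) (hsub : Metric.closedBall (c₁ + s^2) r ⊆ U)
    (hcenter : sq (c₁ + s^2) = s) (hsq : ∀ c ∈ U, (sq c)^2 = c - c₁)
    (hrs : r < (‖s‖ / 2)^2) :
    ∀ c ∈ Metric.closedBall (c₁ + s^2) r, ‖sq c - s‖ < ‖s‖ / 2 := by
  set t := ‖s‖ / 2 with ht
  have htge : 0 ≤ t := by rw [ht]; positivity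
  have ht0 : 0 < t := by nlinarith
  have hcont : ContinuousOn sq U := fun c hc => (hsqc c hc).continuousWithinAt
  set u : Set ℂ := U ∩ sq ⁻¹' Metric.ball s t with hu
  set v : Set ℂ := U ∩ sq ⁻¹' Metric.ball (-s) t with hv
  have hou : IsOpen u := hcont.isOpen_inter_preimage hU isOpen_ball
  have hov : IsOpen v := hcont.isOpen_inter_preimage hU isOpen_ball
  have hdisj : Disjoint u v := by
    rw [Set.disjoint_left]
    rintro c ⟨-, hc1⟩ ⟨-, hc2⟩
    simp only [Set.mem_preimage, mem_ball] at hc1 hc2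
    have h3 : dist s (-s) ≤ dist s (sq c) + dist (sq c) (-s) := dist_triangle _ _ _
    have h4 : dist s (-s) = 2 * (2 * t) := by
      rw [Complex.dist_eq, show s - -s = 2 * s by ring, norm_mul, Complex.norm_two, ht]; ring
    rw [dist_comm s (sq c)] at h3
    linarith
  have hcover : Metric.closedBall (c₁ + s^2) r ⊆ u ∪ v := by
    intro c hc
    have hcU : c ∈ U := hsub hc
    have hprod : ‖sq c - s‖ * ‖sq c + s‖ ≤ r := by
      rw [← norm_mul]
      have h5 : (sq c - s) * (sq c + s) = c - (c₁ + s^2) := by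
        linear_combination hsq c hcU
      rw [h5]
      simpa [Complex.dist_eq] using hc
    by_contra hcon
    simp only [Set.mem_union, hu, hv, Set.mem_inter_iff, Set.mem_preimage, mem_ball,
      Complex.dist_eq, not_or, not_and, not_lt] at hcon
    have h1 := hcon.1 hcU
    have h2 := hcon.2 hcU
    rw [show sq c - -s = sq c + s by ring] at h2
    have : t * t ≤ ‖sq c - s‖ * ‖sq c + s‖ :=
      mul_le_mul h1 h2 ht0.le (norm_nonneg _)
    nlinarith
  have hconn : IsPreconnected (Metric.closedBall (c₁ + s^2) r) :=
    (convex_closedBall _ _).isPreconnected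
  have hmem : ((Metric.closedBall (c₁ + s^2) r) ∩ u).Nonempty := by
    refine ⟨c₁ + s^2, mem_closedBall_self hr.le, hsub (mem_closedBall_self hr.le), ?_⟩
    simp [Set.mem_preimage, hcenter, Complex.dist_eq, ht0]
  have hsubu := hconn.subset_left_of_subset_union hou hov hdisj hcover hmem
  intro c hc
  have hcu := hsubu hc
  simp only [hu, Set.mem_inter_iff, Set.mem_preimage, mem_ball, Complex.dist_eq] at hcu
  exact hcu.2


set_option maxHeartbeats 2000000 in
/-- Rouché argument in the parabolic case `ν = 1`: with `c(n) = -(2π/(A₀n))²` and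
`r_n = |c(n)|^(1+β)`, on the circle `|c - (c₁+c(n))| = r_n` the main term
`-2πi/(A₀√(c-c₁)) + n` is bounded below by `C'n^(1-2β)`, and the equation
`-2πi/(A₀√(c-c₁)) + n + h(c) = 0` has exactly one solution in `D(c₁+c(n), r_n)`. -/
theorem stmt5 (c₁ A₀ : ℂ) (hA : A₀ ≠ 0) (β : ℝ) (hβ : β ∈ Set.Ioo 0 (1/2))
    (C : ℝ) (hC : 0 ≤ C) (U : Set ℂ) (hU : IsOpen U) (hc₁U : c₁ ∉ U)
    (h sq : ℂ → ℂ)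
    (hha : AnalyticOnNhd ℂ h U)
    (hhb : ∀ c ∈ U, ‖h c‖ ≤ C)
    (hsqa : AnalyticOnNhd ℂ sq U)
    (hsq : ∀ c ∈ U, (sq c) ^ 2 = c - c₁)
    (cn : ℕ → ℂ) (hcn : ∀ n : ℕ, cn n = -(2 * Real.pi / (A₀ * n)) ^ 2)
    (rn : ℕ → ℝ) (hrn : ∀ n : ℕ, rn n = ‖cn n‖ ^ ((1:ℝ) + β))
    (hdisk : ∀ᶠ n in Filter.atTop, Metric.closedBall (c₁ + cn n) (rn n) ⊆ U)
    (hbranch : ∀ᶠ n in Filter.atTop, sq (c₁ + cn n) = 2 * Real.pi * Complex.I / (A₀ * n)) :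
    ∃ C' > 0, ∀ᶠ n in Filter.atTop,
      (∀ c : ℂ, ‖c - (c₁ + cn n)‖ = rn n →
        C' * (n : ℝ) ^ ((1:ℝ) - 2 * β)
          ≤ ‖-(2 * Real.pi * Complex.I) / (A₀ * sq c) + n‖) ∧
      (∃! c : ℂ, c ∈ Metric.ball (c₁ + cn n) (rn n) ∧
        -(2 * Real.pi * Complex.I) / (A₀ * sq c) + n + h c = 0) := by
  obtain ⟨hβ0, hβ2⟩ := hβ
  have hA0 : 0 < ‖A₀‖ := norm_pos_iff.mpr hA
  set K : ℝ := (2 * Real.pi / ‖A₀‖)^2 with hKdef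
  have hK0 : 0 < K := by positivity
  refine ⟨K^β / 6, by positivity, ?_⟩
  -- eventual numeric facts
  have ev1 : ∀ᶠ n : ℕ in atTop, 4 * K^β < ((n:ℝ))^(2*β) := by
    have := (tendsto_rpow_atTop (by positivity : 0 < 2*β)).comp
      tendsto_natCast_atTop_atTop (α := ℕ)
    exact this.eventually_gt_atTop _
  have ev2 : ∀ᶠ n : ℕ in atTop, 96 * (4*C+2) / K^β ≤ ((n:ℝ))^((1:ℝ)-2*β) := by
    have := (tendsto_rpow_atTop (by linarith : 0 < (1:ℝ)-2*β)).comp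
      tendsto_natCast_atTop_atTop (α := ℕ)
    exact this.eventually_ge_atTop _
  have ev3 : ∀ᶠ n : ℕ in atTop, 4*C + 4 ≤ (n:ℝ) :=
    tendsto_natCast_atTop_atTop.eventually_ge_atTop _
  filter_upwards [hdisk, hbranch, ev1, ev2, ev3, eventually_ge_atTop 1]
    with n hsub hbr h4 h7' hxC hn1
  -- basic quantities
  set x : ℝ := (n:ℝ) with hxdef
  have hx1 : (1:ℝ) ≤ x := by rw [hxdef]; exact_mod_cast hn1
  have hx0 : (0:ℝ) < x := lt_of_lt_of_le zero_lt_one hx1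
  have hnC : ((n:ℂ)) ≠ 0 := Nat.cast_ne_zero.mpr (by omega)
  have hAn : A₀ * (n:ℂ) ≠ 0 := mul_ne_zero hA hnC
  set s : ℂ := 2 * Real.pi * Complex.I / (A₀ * n) with hsdef
  have hs2 : s^2 = cn n := by
    rw [hcn, hsdef]; field_simp
    linear_combination Complex.I_sq
  set σ : ℝ := ‖s‖ with hσdef
  have hσval : σ = 2 * Real.pi / (‖A₀‖ * x) := by
    rw [hσdef, hsdef]
    simp [norm_div, norm_mul, Complex.norm_real, Real.norm_eq_abs, abs_of_pos Real.pi_pos, Complex.norm_natCast]; rfl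
  have hσ0 : 0 < σ := by rw [hσval]; positivity
  have hσK : σ^2 = K / x^2 := by rw [hσval, hKdef]; field_simp
  set r : ℝ := rn n with hrdef
  have hrK : r = (K / x^2)^((1:ℝ)+β) := by
    rw [hrdef, hrn, ← hs2, norm_pow, ← hσdef, hσK]
  have hKx2 : (0:ℝ) < K / x^2 := by positivity
  have hr0 : 0 < r := by rw [hrK]; positivity
  set P : ℝ := x^(2*β) with hPdef
  have hP0 : 0 < P := Real.rpow_pos_of_pos hx0 _
  have hxP : x^((1:ℝ)-2*β) = x / P := by
    rw [Real.rpow_sub hx0, Real.rpow_one, hPdef]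
  have hx2r : (x^2:ℝ)^(β:ℝ) = P := by
    rw [← Real.rpow_natCast x 2, ← Real.rpow_mul hx0.le, hPdef]; norm_num
  have hrP : r * P = K^β * (K / x^2) := by
    rw [hrK, Real.rpow_add hKx2, Real.rpow_one,
      Real.div_rpow hK0.le (by positivity), hx2r]
    field_simp
  have hrx3 : r * x^3 = K * (K^β * (x / P)) := by
    have : r = K^β * (K / x^2) / P := by rw [eq_div_iff hP0.ne']; exact hrP
    rw [this]; field_simp
  have h7 : 96 * (4*C+2) ≤ K^β * (x/P) := by
    rw [← hxP]
    calc 96*(4*C+2) = K^β * (96*(4*C+2)/K^β) := by field_simp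
    _ ≤ K^β * x^((1:ℝ)-2*β) := by
        apply mul_le_mul_of_nonneg_left h7' (by positivity)
  have hrs : r < (σ/2)^2 := by
    have h1 : r * P < (σ/2)^2 * P := by
      rw [hrP]
      have heq : (σ/2)^2 * P = (K/x^2) * (P/4) := by rw [div_pow, hσK]; ring
      rw [heq]
      calc K^β * (K/x^2) = (K/x^2)/4 * (4*K^β) := by ring
      _ < (K/x^2)/4 * P := by
          exact mul_lt_mul_of_pos_left h4 (by positivity)
      _ = (K/x^2) * (P/4) := by ring
    exact lt_of_mul_lt_mul_right h1 hP0.le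
  -- the center and branch lemma
  have hcenter : c₁ + cn n = c₁ + s^2 := by rw [hs2]
  have hbr' : sq (c₁ + s^2) = s := by rw [← hcenter, hbr, hsdef]
  have hsub' : Metric.closedBall (c₁ + s^2) r ⊆ U := by rw [← hcenter]; exact hsub
  have hbranchA : ∀ c ∈ Metric.closedBall (c₁ + s^2) r,
      ‖sq c - s‖ < σ / 2 :=
    branchA U hU sq (fun c hc => (hsqa c hc).continuousAt) c₁ s r hr0 hsub' hbr' hsq hrs
  have habs_nat : ‖(n:ℂ)‖ = x := by
    rw [Complex.norm_natCast, hxdef]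
  constructor
  · -- circle lower bound
    intro c hcirc
    have hcball : c ∈ Metric.closedBall (c₁ + s^2) r := by
      rw [mem_closedBall, Complex.dist_eq, ← hcenter, hcirc]
    have hd := hbranchA c hcball
    have hcU : c ∈ U := hsub' hcball
    have hd0 : 0 ≤ ‖sq c - s‖ := norm_nonneg _
    have hup : ‖sq c‖ ≤ 2*σ := by
      have h1 : ‖sq c‖ ≤ ‖sq c - s‖ + ‖s‖ := by
        calc ‖sq c‖ = ‖(sq c - s) + s‖ := by congr 1; ring
        _ ≤ _ := norm_add_le _ _
      rw [← hσdef] at h1; linarith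
    have hsum : ‖sq c + s‖ ≤ 3*σ := by
      have h1 : ‖sq c + s‖ ≤ ‖sq c - s‖ + ‖2*s‖ := by
        calc ‖sq c + s‖ = ‖(sq c - s) + 2*s‖ := by congr 1; ring
        _ ≤ _ := norm_add_le _ _
      rw [norm_mul, Complex.norm_two, ← hσdef] at h1; linarith
    have hprodeq : ‖sq c - s‖ * ‖sq c + s‖ = r := by
      rw [← norm_mul, show (sq c - s)*(sq c + s) = c - (c₁ + cn n) by
        linear_combination (hsq c hcU) - hs2]
      exact hcirc
    have hlow : r ≤ ‖sq c - s‖ * (3*σ) := by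
      rw [← hprodeq]
      exact mul_le_mul_of_nonneg_left hsum hd0
    have hsqlow : σ/2 ≤ ‖sq c‖ := by
      have h1 : σ ≤ ‖sq c - s‖ + ‖sq c‖ := by
        calc σ = ‖s - sq c + sq c‖ := by rw [hσdef]; congr 1; ring
        _ ≤ ‖s - sq c‖ + ‖sq c‖ := norm_add_le _ _
        _ = _ := by rw [norm_sub_rev]
      linarith
    have hsqpos : 0 < ‖sq c‖ := by linarith
    have hsqne : sq c ≠ 0 := by
      intro h0; rw [h0] at hsqpos; simp at hsqpos
    have hE : -(2 * Real.pi * Complex.I) / (A₀ * sq c) + n = (n:ℂ) * (sq c - s) / sq c := by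
      rw [hsdef]; field_simp; ring
    rw [hE, norm_div, norm_mul, habs_nat]
    rw [le_div_iff₀ hsqpos]
    have hid : K^β/6 * x^((1:ℝ)-2*β) * (6*σ^2) = x * r := by
      rw [hxP, hσK]
      have hr' : r = K^β * (K / x^2) / P := by rw [eq_div_iff hP0.ne']; exact hrP
      rw [hr']; field_simp
    calc K^β/6 * x^((1:ℝ)-2*β) * ‖sq c‖
        ≤ K^β/6 * x^((1:ℝ)-2*β) * (2*σ) := by
          exact mul_le_mul_of_nonneg_left hup
            (by positivity : (0:ℝ) ≤ K^β/6 * x^((1:ℝ)-2*β))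
      _ ≤ x * ‖sq c - s‖ := by
          have h2 : x * r ≤ x * (‖sq c - s‖*(3*σ)) :=
            mul_le_mul_of_nonneg_left hlow hx0.le
          have h3 : K^β/6 * x^((1:ℝ)-2*β) * (2*σ) * (3*σ)
              ≤ (x * ‖sq c - s‖) * (3*σ) := by
            calc K^β/6 * x^((1:ℝ)-2*β) * (2*σ) * (3*σ)
                = K^β/6 * x^((1:ℝ)-2*β) * (6*σ^2) := by ring
              _ = x * r := hid
              _ ≤ x * (‖sq c - s‖*(3*σ)) := h2
              _ = (x * ‖sq c - s‖) * (3*σ) := by ring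
          exact le_of_mul_le_mul_right h3 (by positivity)
  · -- existence and uniqueness
    rw [hcenter]
    obtain ⟨g, hgdef⟩ : ∃ g : ℂ → ℂ, g = fun c => c₁ - (2 * Real.pi / (A₀ * ((n:ℂ) + h c)))^2 :=
      ⟨_, rfl⟩
    have hnh : ∀ c ∈ Metric.closedBall (c₁ + s^2) r,
        ‖h c‖ ≤ C ∧ x/2 ≤ ‖(n:ℂ) + h c‖ ∧ ((n:ℂ) + h c) ≠ 0 := by
      intro c hc
      have hhcC := hhb c (hsub' hc)
      have h2 : x ≤ ‖(n:ℂ) + h c‖ + ‖h c‖ := by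
        calc x = ‖(n:ℂ)‖ := habs_nat.symm
          _ = ‖((n:ℂ) + h c) - h c‖ := by congr 1; ring
          _ ≤ _ := by simpa using norm_sub_le ((n:ℂ) + h c) (h c)
      have hge : x/2 ≤ ‖(n:ℂ) + h c‖ := by linarith
      refine ⟨hhcC, hge, ?_⟩
      intro h0; rw [h0] at hge; simp at hge; linarith
    have hKabs : ‖(2 * (Real.pi:ℂ) / A₀)^2‖ = K := by
      rw [norm_pow, norm_div, norm_mul, Complex.norm_two, Complex.norm_real, Real.norm_eq_abs,
        abs_of_pos Real.pi_pos, hKdef]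
    have hgnear : ∀ c ∈ Metric.closedBall (c₁ + s^2) r,
        ‖g c - (c₁ + s^2)‖ ≤ r/8 := by
      intro c hc
      obtain ⟨h1, h2, h3⟩ := hnh c hc
      have hgid : g c - (c₁ + s^2) = (2 * (Real.pi:ℂ) / A₀)^2 *
          ((h c * (2*(n:ℂ) + h c)) / (((n:ℂ))^2 * ((n:ℂ) + h c)^2)) := by
        rw [hgdef]; simp only
        rw [hs2, hcn]
        field_simp
        ring
      rw [hgid, norm_mul, hKabs, norm_div, norm_mul, norm_mul, norm_pow, norm_pow, habs_nat]
      have ha : ‖2*(n:ℂ) + h c‖ ≤ 3*x := by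
        calc ‖2*(n:ℂ) + h c‖
            ≤ ‖2*(n:ℂ)‖ + ‖h c‖ := norm_add_le _ _
          _ ≤ 2*x + C := by rw [norm_mul, Complex.norm_two, habs_nat]; linarith
          _ ≤ 3*x := by linarith
      have hnum : ‖h c‖ * ‖2*(n:ℂ) + h c‖ ≤ C * (3*x) :=
        mul_le_mul h1 ha (norm_nonneg _) hC
      have hden : x^4/4 ≤ x^2 * ‖(n:ℂ) + h c‖^2 := by
        have h4' : (x/2)^2 ≤ ‖(n:ℂ) + h c‖^2 := by
          apply pow_le_pow_left₀ (by positivity) h2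
        nlinarith [sq_nonneg x]
      have hfrac : ‖h c‖ * ‖2*(n:ℂ)+h c‖ /
          (x^2 * ‖(n:ℂ)+h c‖^2) ≤ C*(3*x) / (x^4/4) :=
        div_le_div₀ (by positivity) hnum (by positivity) hden
      calc K * (‖h c‖ * ‖2*(n:ℂ)+h c‖ /
            (x^2 * ‖(n:ℂ)+h c‖^2))
          ≤ K * (C*(3*x) / (x^4/4)) := mul_le_mul_of_nonneg_left hfrac hK0.le
        _ = 12*K*C/x^3 := by field_simp; ring
        _ ≤ r/8 := by
            rw [div_le_div_iff₀ (by positivity) (by norm_num)]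
            have h96 : 96 * C ≤ K^β * (x/P) := le_trans (by linarith) h7
            have h5 : K * (96*C) ≤ r * x^3 := by
              rw [hrx3]; exact mul_le_mul_of_nonneg_left h96 hK0.le
            nlinarith
    have hiff : ∀ c ∈ Metric.closedBall (c₁ + s^2) r,
        (-(2 * Real.pi * Complex.I) / (A₀ * sq c) + n + h c = 0 ↔ c = g c) := by
      intro c hc
      obtain ⟨h1, h2, h3⟩ := hnh c hc
      have hcU := hsub' hc
      have hd := hbranchA c hc
      have hsqlow : σ/2 ≤ ‖sq c‖ := by
        have hq : σ ≤ ‖sq c - s‖ + ‖sq c‖ := by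
          calc σ = ‖s - sq c + sq c‖ := by rw [hσdef]; congr 1; ring
          _ ≤ ‖s - sq c‖ + ‖sq c‖ := norm_add_le _ _
          _ = _ := by rw [norm_sub_rev]
        linarith
      have hsqpos : 0 < ‖sq c‖ := by linarith
      have hsqne : sq c ≠ 0 := by
        intro h0; rw [h0] at hsqpos; simp at hsqpos
      have hAne : A₀ * ((n:ℂ) + h c) ≠ 0 := mul_ne_zero hA h3
      constructor
      · intro heq0
        have hval : A₀ * ((n:ℂ) + h c) * sq c = 2*(Real.pi:ℂ)*Complex.I := by
          field_simp [hsqne] at heq0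
          linear_combination heq0
        rw [hgdef]; simp only
        field_simp
        linear_combination (A₀*((n:ℂ)+h c)*sq c + 2*(Real.pi:ℂ)*Complex.I) * hval
          - (A₀*((n:ℂ)+h c))^2 * (hsq c hcU) - (2*(Real.pi:ℂ))^2 * Complex.I_sq
          + 8*(Real.pi:ℂ)^2 * Complex.I_sq
      · intro hceq
        set w : ℂ := 2*(Real.pi:ℂ)*Complex.I / (A₀ * ((n:ℂ) + h c)) with hwdef
        have hw2 : w^2 = c - c₁ := by
          have hcc : c - c₁ = -(2 * (Real.pi:ℂ) / (A₀ * ((n:ℂ) + h c)))^2 := by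
            conv_lhs => rw [hceq]
            rw [hgdef]; ring
          rw [hcc, hwdef]
          field_simp
          linear_combination Complex.I_sq
        have hws : ‖w - s‖ ≤ σ/2 := by
          have hid2 : w - s = -s * h c / ((n:ℂ) + h c) := by
            rw [hwdef, hsdef]; field_simp; ring
          rw [hid2, norm_div, norm_mul, norm_neg, ← hσdef]
          calc σ * ‖h c‖ / ‖(n:ℂ) + h c‖
              ≤ σ * C / (x/2) := by
                apply div_le_div₀ (by positivity)
                  (mul_le_mul_of_nonneg_left h1 hσ0.le) (by positivity) h2
            _ ≤ σ/2 := by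
                rw [div_le_div_iff₀ (by positivity) (by norm_num)]
                nlinarith
        have hcases : sq c = w ∨ sq c = -w := by
          have hz : (sq c - w) * (sq c + w) = 0 := by
            linear_combination (hsq c hcU) - hw2
          rcases mul_eq_zero.mp hz with hz' | hz'
          · left; exact sub_eq_zero.mp hz'
          · right; exact eq_neg_of_add_eq_zero_left hz'
        rcases hcases with hcw | hcw
        · rw [hcw, hwdef]
          have hpi : (Real.pi:ℂ) ≠ 0 := Complex.ofReal_ne_zero.mpr Real.pi_ne_zero
          field_simp
          ring
        · exfalso
          have h5 : 2*σ ≤ ‖w - s‖ + ‖w + s‖ := by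
            calc 2*σ = ‖2*s‖ := by rw [norm_mul, Complex.norm_two, ← hσdef]
              _ = ‖(w + s) - (w - s)‖ := by congr 1; ring
              _ ≤ ‖w + s‖ + ‖w - s‖ := by
                  simpa using norm_sub_le (w + s) (w - s)
              _ = _ := by ring
          have h6 : ‖sq c - s‖ = ‖w + s‖ := by
            rw [hcw, show -w - s = -(w+s) by ring, norm_neg]
          linarith
    -- Lipschitz bound via Schwarz lemma
    have hLip : ∀ c ∈ Metric.closedBall (c₁+s^2) (r/8), ∀ c' ∈ Metric.closedBall (c₁+s^2) (r/8),
        dist (h c) (h c') ≤ (4*C+2)/r * dist c c' := by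
      intro c hc c' hc'
      rw [mem_closedBall] at hc hc'
      have hsubball : Metric.ball c' (r/2) ⊆ U := by
        intro z hz
        rw [mem_ball] at hz
        apply hsub'
        rw [mem_closedBall]
        calc dist z (c₁+s^2) ≤ dist z c' + dist c' (c₁+s^2) := dist_triangle _ _ _
          _ ≤ r := by linarith
      have hdiff : DifferentiableOn ℂ h (Metric.ball c' (r/2)) :=
        fun z hz => ((hha z (hsubball hz)).differentiableAt).differentiableWithinAt
      have hmaps : Set.MapsTo h (Metric.ball c' (r/2)) (Metric.ball (h c') (2*C+1)) := by
        intro z hz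
        rw [mem_ball, Complex.dist_eq]
        have l1 := hhb z (hsubball hz)
        have l2 := hhb c' (hsubball (mem_ball_self (by positivity)))
        calc ‖h z - h c'‖ ≤ ‖h z‖ + ‖h c'‖ := by
              simpa using norm_sub_le (h z) (h c')
          _ ≤ 2*C := by linarith
          _ < 2*C+1 := by linarith
      have hcball2 : c ∈ Metric.ball c' (r/2) := by
        rw [mem_ball]
        calc dist c c' ≤ dist c (c₁+s^2) + dist (c₁+s^2) c' := dist_triangle _ _ _
          _ ≤ r/4 := by rw [dist_comm (c₁+s^2) c']; linarith
          _ < r/2 := by linarith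
      have := Complex.dist_le_div_mul_dist_of_mapsTo_ball hdiff (hmaps.mono_right ball_subset_closedBall) hcball2
      calc dist (h c) (h c') ≤ (2*C+1)/(r/2) * dist c c' := this
        _ = (4*C+2)/r * dist c c' := by
            congr 1
            field_simp
            ring
    -- contraction
    have hcontr : ∀ c ∈ Metric.closedBall (c₁+s^2) (r/8),
        ∀ c' ∈ Metric.closedBall (c₁+s^2) (r/8),
        dist (g c) (g c') ≤ (1/2) * dist c c' := by
      intro c hc c' hc'
      have hc8 : c ∈ Metric.closedBall (c₁+s^2) r :=
        closedBall_subset_closedBall (by linarith) hc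
      have hc8' : c' ∈ Metric.closedBall (c₁+s^2) r :=
        closedBall_subset_closedBall (by linarith) hc'
      obtain ⟨h1, h2, h3⟩ := hnh c hc8
      obtain ⟨h1', h2', h3'⟩ := hnh c' hc8'
      have hgid : g c - g c' = (2*(Real.pi:ℂ)/A₀)^2 *
          (((h c - h c') * (2*(n:ℂ) + h c + h c')) /
            (((n:ℂ)+h c)^2 * ((n:ℂ)+h c')^2)) := by
        rw [hgdef]; simp only
        field_simp
        ring
      rw [Complex.dist_eq, hgid, norm_mul, hKabs, norm_div, norm_mul, norm_mul, norm_pow, norm_pow]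
      have hLc := hLip c hc c' hc'
      rw [Complex.dist_eq, Complex.dist_eq] at hLc
      have ha : ‖2*(n:ℂ) + h c + h c'‖ ≤ 3*x := by
        calc ‖2*(n:ℂ) + h c + h c'‖
            ≤ ‖2*(n:ℂ) + h c‖ + ‖h c'‖ := norm_add_le _ _
          _ ≤ (‖2*(n:ℂ)‖ + ‖h c‖) + C := by
              have := norm_add_le (2*(n:ℂ)) (h c)
              linarith
          _ ≤ 2*x + C + C := by rw [norm_mul, Complex.norm_two, habs_nat]; linarith
          _ ≤ 3*x := by linarith
      have hnum : ‖h c - h c'‖ * ‖2*(n:ℂ) + h c + h c'‖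
          ≤ ((4*C+2)/r * ‖c - c'‖) * (3*x) :=
        mul_le_mul hLc ha (norm_nonneg _) (by positivity)
      have hden : x^4/16 ≤ ‖(n:ℂ)+h c‖^2 * ‖(n:ℂ)+h c'‖^2 := by
        have e1 : (x/2)^2 ≤ ‖(n:ℂ) + h c‖^2 := by
          apply pow_le_pow_left₀ (by positivity) h2
        have e2 : (x/2)^2 ≤ ‖(n:ℂ) + h c'‖^2 := by
          apply pow_le_pow_left₀ (by positivity) h2'
        nlinarith [sq_nonneg (x/2)]
      have hfrac : ‖h c - h c'‖ * ‖2*(n:ℂ)+h c+h c'‖ /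
          (‖(n:ℂ)+h c‖^2 * ‖(n:ℂ)+h c'‖^2)
          ≤ ((4*C+2)/r * ‖c - c'‖) * (3*x) / (x^4/16) :=
        div_le_div₀ (by positivity) hnum (by positivity) hden
      have key : 96*K*(4*C+2) ≤ r*x^3 := by
        have := mul_le_mul_of_nonneg_left h7 hK0.le
        rw [hrx3]; linarith
      calc K * (‖h c - h c'‖ * ‖2*(n:ℂ)+h c+h c'‖ /
            (‖(n:ℂ)+h c‖^2 * ‖(n:ℂ)+h c'‖^2))
          ≤ K * (((4*C+2)/r * ‖c - c'‖) * (3*x) / (x^4/16)) :=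
            mul_le_mul_of_nonneg_left hfrac hK0.le
        _ = (48*K*(4*C+2)/(r*x^3)) * ‖c - c'‖ := by
            field_simp; ring
        _ ≤ (1/2) * ‖c - c'‖ := by
            apply mul_le_mul_of_nonneg_right _ (norm_nonneg _)
            rw [div_le_iff₀ (by positivity)]
            linarith
        _ = (1/2) * dist c c' := by rw [Complex.dist_eq]
    -- Banach fixed point
    have hmapsTo : Set.MapsTo g (Metric.closedBall (c₁+s^2) (r/8))
        (Metric.closedBall (c₁+s^2) (r/8)) := by
      intro c hc
      have := hgnear c (closedBall_subset_closedBall (by linarith) hc)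
      rw [mem_closedBall, Complex.dist_eq]
      exact this
    have hlip : LipschitzOnWith (1/2 : NNReal) g (Metric.closedBall (c₁+s^2) (r/8)) := by
      apply LipschitzOnWith.of_dist_le_mul
      intro c hc c' hc'
      have := hcontr c hc c' hc'
      calc dist (g c) (g c') ≤ 1/2 * dist c c' := this
        _ = ((1/2 : NNReal):ℝ) * dist c c' := by norm_num
    have hcw : ContractingWith (1/2) (hmapsTo.restrict g _ _) :=
      ⟨by rw [one_div]; exact two_inv_lt_one, hlip.mapsToRestrict hmapsTo⟩
    obtain ⟨y, hyS, hyfix, -, -⟩ := ContractingWith.exists_fixedPoint'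
      isClosed_closedBall.isComplete hmapsTo hcw
      (mem_closedBall_self (by positivity)) (edist_ne_top _ _)
    have hgy : g y = y := hyfix
    have hyS' : dist y (c₁+s^2) ≤ r/8 := mem_closedBall.mp hyS
    refine ⟨y, ⟨?_, ?_⟩, ?_⟩
    · rw [mem_ball]; linarith
    · exact (hiff y (closedBall_subset_closedBall (by linarith) hyS)).2 hgy.symm
    · rintro y' ⟨hy'ball, hy'eq⟩
      have hy'cb : y' ∈ Metric.closedBall (c₁+s^2) r := ball_subset_closedBall hy'ball
      have hy'g : y' = g y' := (hiff y' hy'cb).1 hy'eq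
      have hy'S : y' ∈ Metric.closedBall (c₁+s^2) (r/8) := by
        rw [mem_closedBall, Complex.dist_eq]
        calc ‖y' - (c₁+s^2)‖ = ‖g y' - (c₁+s^2)‖ := by rw [← hy'g]
          _ ≤ r/8 := hgnear y' hy'cb
      have hdd := hcontr y' hy'S y hyS
      rw [← hy'g, hgy] at hdd
      have : dist y' y ≤ 0 := by linarith
      exact dist_le_zero.mp this
end

section
/- Let c₁ ∈ ℂ, μ₁ ∈ ℂ with |μ₁| > 1, K₀ ≠ 0, α ≥ 1 an integer. Suppose μ, τ are holomorphic near c₁ with μ(c) = μ₁ + M₀(c−c₁)^α + o(|c−c₁|^α) and τ(c) = K₀(c−c₁) + o(|c−c₁|), where M₀ ≠ 0. Let c_n → c₁ be a sequence with c_n − c₁ ~ d_n where d_n := z₀/(μ₁ⁿ K₀) for a fixed z₀ ≠ 0. Then as n → ∞: (i) μ(c_n)ⁿ τ'(c_n) ~ K₀ μ₁ⁿ → ∞, and (ii) n μ(c_n)^{n−1} μ'(c_n) τ(c_n) ~ n μ₁^{n−1} M₀ K₀ α d_n^α, which is O(n) if α = 1 and tends to 0 if α ≥ 2. -/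
open Filter Asymptotics

/-- Factorization: analytic f that is o((z-x)^m) factors as (z-x)^(m+1) * g. -/
lemma aux_factor (m : ℕ) (f : ℂ → ℂ) (x : ℂ) (hf : AnalyticAt ℂ f x)
    (ho : f =o[nhds x] (fun z => (z - x) ^ m)) :
    ∃ g : ℂ → ℂ, AnalyticAt ℂ g x ∧ ∀ᶠ z in nhds x, f z = (z - x) ^ (m + 1) * g z := by
  rcases eq_or_ne (analyticOrderAt f x) ⊤ with htop | hfin
  · refine ⟨0, analyticAt_const, ?_⟩
    filter_upwards [analyticOrderAt_eq_top.mp htop] with z hz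
    simp [hz]
  · obtain ⟨k, hk⟩ := WithTop.ne_top_iff_exists.mp hfin
    obtain ⟨g₀, hg₀, hg₀0, heq⟩ := (hf.analyticOrderAt_eq_natCast (n := k)).mp hk.symm
    by_cases hkm : m + 1 ≤ k
    · refine ⟨fun z => (z - x) ^ (k - (m + 1)) * g₀ z,
        (((analyticAt_id.sub analyticAt_const).pow _).mul hg₀), ?_⟩
      filter_upwards [heq] with z hz
      rw [hz, smul_eq_mul, ← mul_assoc, ← pow_add]
      congr 2
      omega
    · exfalso
      push_neg at hkm
      have hkm' : k ≤ m := by omega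
      have hgx : 0 < ‖g₀ x‖ := norm_pos_iff.mpr hg₀0
      have h1 : ∀ᶠ z in nhds x, ‖g₀ x‖ / 2 ≤ ‖g₀ z‖ := by
        have hcont : ContinuousAt g₀ x := hg₀.continuousAt
        have := hcont.eventually (eventually_norm_sub_lt (g₀ x) (by positivity : (0:ℝ) < ‖g₀ x‖ / 2))
        filter_upwards [this] with z hz
        have := norm_sub_norm_le (g₀ x) (g₀ z)
        have h2 : ‖g₀ x - g₀ z‖ < ‖g₀ x‖ / 2 := by rwa [norm_sub_rev]
        linarith
      have h2 := ho.def (by positivity : (0:ℝ) < ‖g₀ x‖ / 4)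
      have h3 : ∀ᶠ z in nhds x, ‖z - x‖ ≤ 1 := by
        filter_upwards [Metric.closedBall_mem_nhds x one_pos] with z hz
        simpa [Metric.mem_closedBall, dist_eq_norm] using hz
      have hall : ∀ᶠ z in nhdsWithin x {x}ᶜ, False := by
        filter_upwards [(heq.and (h1.and (h2.and h3))).filter_mono nhdsWithin_le_nhds,
          self_mem_nhdsWithin] with z ⟨hz1, hz2, hz3, hz4⟩ hz5
        have hzx : z ≠ x := hz5
        have hwpos : 0 < ‖z - x‖ := by
          simpa [sub_eq_zero] using norm_pos_iff.mpr (sub_ne_zero.mpr hzx)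
        have hfz : ‖f z‖ = ‖z - x‖ ^ k * ‖g₀ z‖ := by
          rw [hz1]; simp [norm_mul, norm_pow]
        have hle : ‖z - x‖ ^ m ≤ ‖z - x‖ ^ k :=
          pow_le_pow_of_le_one (norm_nonneg _) hz4 hkm'
        have hnorm : ‖(z - x) ^ m‖ = ‖z - x‖ ^ m := norm_pow _ _
        rw [hfz, hnorm] at hz3
        have hA : ‖z - x‖ ^ k * (‖g₀ x‖ / 2) ≤ ‖z - x‖ ^ k * ‖g₀ z‖ := by
          exact mul_le_mul_of_nonneg_left hz2 (by positivity)
        have hB : ‖g₀ x‖ / 4 * ‖z - x‖ ^ m ≤ ‖g₀ x‖ / 4 * ‖z - x‖ ^ k :=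
          mul_le_mul_of_nonneg_left hle (by positivity)
        have hkpos : 0 < ‖z - x‖ ^ k := by positivity
        nlinarith
      have : (nhdsWithin x {x}ᶜ).NeBot := by infer_instance
      exact (hall.exists).elim (fun z hz => hz)

/-- (1 + aₙ)^(eₙ) → 1 when n‖aₙ‖ → 0 and eₙ ≤ n. -/
lemma aux_pow_one (a : ℕ → ℂ) (e : ℕ → ℕ) (he : ∀ n, e n ≤ n)
    (h : Tendsto (fun n : ℕ => (n : ℝ) * ‖a n‖) atTop (nhds 0)) :
    Tendsto (fun n => (1 + a n) ^ e n) atTop (nhds 1) := by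
  have ha0 : Tendsto a atTop (nhds 0) := by
    rw [tendsto_zero_iff_norm_tendsto_zero]
    refine squeeze_zero' (Eventually.of_forall fun n => norm_nonneg _) ?_ h
    filter_upwards [eventually_ge_atTop 1] with n hn
    have h1 : (1:ℝ) ≤ (n:ℝ) := by exact_mod_cast hn
    nlinarith [norm_nonneg (a n)]
  have hlog : HasDerivAt Complex.log 1 1 := by
    simpa using Complex.hasDerivAt_log (by simp [Complex.slitPlane] : (1:ℂ) ∈ Complex.slitPlane)
  have hlo : (fun z : ℂ => Complex.log z - Complex.log 1 - (z - 1) • (1:ℂ)) =o[nhds 1]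
      fun z => z - 1 := (hasDerivAt_iff_isLittleO.mp hlog)
  have h1a : Tendsto (fun n => 1 + a n) atTop (nhds 1) := by
    simpa using tendsto_const_nhds.add ha0
  have hlo2 : (fun n => Complex.log (1 + a n) - a n) =o[atTop] a := by
    have := hlo.comp_tendsto h1a
    simp only [Function.comp_def, Complex.log_one, sub_zero, add_sub_cancel_left,
      smul_eq_mul, mul_one] at this
    exact this
  have hb : Tendsto (fun n => (e n : ℂ) * Complex.log (1 + a n)) atTop (nhds 0) := by
    rw [tendsto_zero_iff_norm_tendsto_zero]
    have hbd := hlo2.def (by norm_num : (0:ℝ) < 1/2)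
    refine squeeze_zero' (Eventually.of_forall fun n => norm_nonneg _)
      ?_ (by simpa using h.const_mul (3/2 : ℝ))
    filter_upwards [hbd] with n hn
    have h4 : ‖Complex.log (1 + a n)‖ ≤ (3/2) * ‖a n‖ := by
      have := norm_sub_norm_le (Complex.log (1 + a n)) (a n)
      calc ‖Complex.log (1 + a n)‖ ≤ ‖Complex.log (1 + a n) - a n‖ + ‖a n‖ := by
            simpa using norm_add_le (Complex.log (1 + a n) - a n) (a n)
      _ ≤ 1/2 * ‖a n‖ + ‖a n‖ := by linarith
      _ = (3/2) * ‖a n‖ := by ring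
    calc ‖(e n : ℂ) * Complex.log (1 + a n)‖ = (e n : ℝ) * ‖Complex.log (1 + a n)‖ := by
          simp [norm_mul]
    _ ≤ (n : ℝ) * ((3/2) * ‖a n‖) := by
        apply mul_le_mul (by exact_mod_cast he n) h4 (norm_nonneg _) (Nat.cast_nonneg _)
    _ = 3/2 * ((n:ℝ) * ‖a n‖) := by ring
  have hexp : Tendsto (fun n => Complex.exp ((e n : ℂ) * Complex.log (1 + a n))) atTop
      (nhds 1) := by
    have := (Complex.continuous_exp.continuousAt (x := 0)).tendsto.comp hb
    simpa [Function.comp_def] using this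
  refine hexp.congr' ?_
  filter_upwards [h1a.eventually_ne one_ne_zero] with n hn
  rw [Complex.exp_nat_mul, Complex.exp_log hn]

set_option maxHeartbeats 1000000 in
/-- Key asymptotics in the Misiurewicz case: with `μ(c) = μ₁ + M₀(c-c₁)^α + o(...)`,
`τ(c) = K₀(c-c₁) + o(...)` and `c_n - c₁ ~ d_n = z₀/(μ₁ⁿK₀)`:
(i) `μ(c_n)ⁿ τ'(c_n) ~ K₀μ₁ⁿ → ∞`, and
(ii) `n μ(c_n)^(n-1) μ'(c_n) τ(c_n) ~ n μ₁^(n-1) M₀K₀α d_nᵅ`, which is `O(n)` when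
`α = 1` and tends to `0` when `α ≥ 2`. -/
theorem stmt6 (c₁ μ₁ M₀ K₀ z₀ : ℂ) (hμ₁ : 1 < ‖μ₁‖) (hM : M₀ ≠ 0)
    (hK : K₀ ≠ 0) (hz₀ : z₀ ≠ 0) (α : ℕ) (hα : 1 ≤ α) (ρ : ℝ) (hρ : 0 < ρ)
    (μ τ : ℂ → ℂ)
    (hμa : AnalyticOnNhd ℂ μ (Metric.ball c₁ ρ))
    (hτa : AnalyticOnNhd ℂ τ (Metric.ball c₁ ρ))
    (hμe : (fun c => μ c - μ₁ - M₀ * (c - c₁) ^ α) =o[nhds c₁] (fun c => (c - c₁) ^ α))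
    (hτe : (fun c => τ c - K₀ * (c - c₁)) =o[nhds c₁] (fun c => c - c₁))
    (c d : ℕ → ℂ) (hd : ∀ n, d n = z₀ / (μ₁ ^ n * K₀))
    (hc : Filter.Tendsto (fun n => (c n - c₁) / d n) Filter.atTop (nhds 1)) :
    (Filter.Tendsto (fun n => μ (c n) ^ n * deriv τ (c n) / (K₀ * μ₁ ^ n))
        Filter.atTop (nhds 1) ∧
      Filter.Tendsto (fun n => ‖μ (c n) ^ n * deriv τ (c n)‖)
        Filter.atTop Filter.atTop) ∧
    (Filter.Tendsto (fun n : ℕ => ((n : ℂ) * μ (c n) ^ (n - 1) * deriv μ (c n) * τ (c n)) /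
          ((n : ℂ) * μ₁ ^ (n - 1) * M₀ * K₀ * (α : ℂ) * d n ^ α))
        Filter.atTop (nhds 1) ∧
      (α = 1 → (fun n : ℕ => (n : ℂ) * μ (c n) ^ (n - 1) * deriv μ (c n) * τ (c n))
          =O[Filter.atTop] (fun n => (n : ℝ))) ∧
      (2 ≤ α → Filter.Tendsto (fun n : ℕ => (n : ℂ) * μ (c n) ^ (n - 1) * deriv μ (c n) * τ (c n))
          Filter.atTop (nhds 0))) := by
  have hμ₁0 : μ₁ ≠ 0 := by
    intro h; rw [h] at hμ₁; simp at hμ₁; linarith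
  have hμ₁n : (1:ℝ) < ‖μ₁‖ := by exact hμ₁
  have hα0 : α ≠ 0 := by omega
  have hαC : (α : ℂ) ≠ 0 := Nat.cast_ne_zero.mpr hα0
  have hdne : ∀ n, d n ≠ 0 := fun n => by
    rw [hd n]; exact div_ne_zero hz₀ (mul_ne_zero (pow_ne_zero _ hμ₁0) hK)
  have hdeq : ∀ n, d n = (z₀ / K₀) * (μ₁⁻¹) ^ n := fun n => by
    rw [hd n, inv_pow]; field_simp
  have hs1 : ‖μ₁⁻¹‖ < 1 := by
    rw [norm_inv]; rw [inv_lt_one_iff₀]; right; exact hμ₁n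
  have hd0 : Tendsto d atTop (nhds 0) := by
    have h := tendsto_const_nhds (x := z₀ / K₀) (f := atTop (α := ℕ)) |>.mul
      (tendsto_pow_atTop_nhds_zero_of_norm_lt_one hs1)
    rw [mul_zero] at h
    exact h.congr (fun n => (hdeq n).symm)
  -- w n := c n - c₁
  have hwq : ∀ n, c n - c₁ = ((c n - c₁) / d n) * d n := fun n =>
    (div_mul_cancel₀ _ (hdne n)).symm
  have hw0 : Tendsto (fun n => c n - c₁) atTop (nhds 0) := by
    have h := hc.mul hd0
    rw [mul_zero] at h
    exact h.congr (fun n => (hwq n).symm)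
  have hcc : Tendsto c atTop (nhds c₁) := by
    have h := hw0.add_const c₁
    simpa using h
  have hwne : ∀ᶠ n in atTop, c n - c₁ ≠ 0 := by
    filter_upwards [hc.eventually_ne one_ne_zero] with n hn
    intro h; apply hn; rw [h, zero_div]
  -- ‖d n‖ bound and key smallness
  have hdnorm : ∀ n, ‖d n‖ = ‖z₀ / K₀‖ * ‖μ₁‖⁻¹ ^ n := fun n => by
    rw [hdeq n, norm_mul, norm_pow, norm_inv]
  have hwd2 : ∀ᶠ n in atTop, ‖c n - c₁‖ ≤ 2 * ‖d n‖ := by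
    have h2 : ∀ᶠ n in atTop, ‖(c n - c₁) / d n‖ ≤ 2 := by
      have := hc.norm
      simp only [norm_one] at this
      exact this.eventually_le_const (by norm_num)
    filter_upwards [h2] with n hn
    calc ‖c n - c₁‖ = ‖(c n - c₁) / d n‖ * ‖d n‖ := by
          rw [← norm_mul, ← hwq n]
    _ ≤ 2 * ‖d n‖ := mul_le_mul_of_nonneg_right hn (norm_nonneg _)
  have hwO : (fun n => c n - c₁) =O[atTop] d := by
    rw [isBigO_iff]
    exact ⟨2, hwd2⟩
  have hnw : Tendsto (fun n : ℕ => (n : ℝ) * ‖c n - c₁‖ ^ α) atTop (nhds 0) := by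
    have hr : (1:ℝ) < ‖μ₁‖ ^ α := one_lt_pow₀ hμ₁n hα0
    have hpow := tendsto_pow_const_div_const_pow_of_one_lt 1 hr
    refine squeeze_zero' (Eventually.of_forall fun n => by positivity) ?_
      (by simpa using hpow.const_mul ((2:ℝ) ^ α * ‖z₀ / K₀‖ ^ α))
    filter_upwards [hwd2] with n hn
    have hstep : (n : ℝ) * ‖c n - c₁‖ ^ α ≤ (n : ℝ) * (2 * ‖d n‖) ^ α := by
      gcongr
    refine hstep.trans (le_of_eq ?_)
    have hxx : (‖μ₁‖⁻¹ ^ n) ^ α = ((‖μ₁‖ ^ α) ^ n)⁻¹ := by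
      rw [← pow_mul, ← pow_mul, mul_comm n α, inv_pow]
    rw [hdnorm n, mul_pow, mul_pow, hxx]
    have hrn : ((‖μ₁‖ ^ α) ^ n) ≠ 0 := by positivity
    field_simp
    simp only [norm_mul, norm_inv, norm_div, mul_pow, inv_pow, div_eq_mul_inv]
  -- little-o data composed along c
  have hμO : (fun n => μ (c n) - μ₁) =O[atTop] (fun n => (c n - c₁) ^ α) := by
    have h1 : (fun z => μ z - μ₁) =O[nhds c₁] (fun z => (z - c₁) ^ α) := by
      have h2 : (fun z => M₀ * (z - c₁) ^ α) =O[nhds c₁] (fun z => (z - c₁) ^ α) :=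
        (isBigO_refl _ _).const_mul_left M₀
      have h3 := hμe.isBigO.add h2
      simpa using h3
    exact h1.comp_tendsto hcc
  -- A n := μ (c n) / μ₁ - 1, smallness n‖A n‖ → 0
  set A : ℕ → ℂ := fun n => μ (c n) / μ₁ - 1 with hA
  have hA1 : ∀ n, 1 + A n = μ (c n) / μ₁ := fun n => by rw [hA]; ring
  have hnA : Tendsto (fun n : ℕ => (n : ℝ) * ‖A n‖) atTop (nhds 0) := by
    obtain ⟨C₀, hC₀⟩ := hμO.bound
    refine squeeze_zero' (Eventually.of_forall fun n => by positivity) ?_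
      (by simpa using hnw.const_mul (C₀ / ‖μ₁‖))
    filter_upwards [hC₀] with n hn
    have hAn : ‖A n‖ = ‖μ (c n) - μ₁‖ / ‖μ₁‖ := by
      have hh : A n = (μ (c n) - μ₁) / μ₁ := by simp only [hA]; field_simp
      rw [hh, norm_div]
    rw [hAn]
    rw [norm_pow] at hn
    calc (n : ℝ) * (‖μ (c n) - μ₁‖ / ‖μ₁‖) ≤ (n : ℝ) * (C₀ * ‖c n - c₁‖ ^ α / ‖μ₁‖) := by
          gcongr
    _ = C₀ / ‖μ₁‖ * ((n : ℝ) * ‖c n - c₁‖ ^ α) := by ring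
  have hAone : ∀ e : ℕ → ℕ, (∀ n, e n ≤ n) →
      Tendsto (fun n => (μ (c n) / μ₁) ^ e n) atTop (nhds 1) := fun e he => by
    have := aux_pow_one A e he hnA
    exact this.congr (fun n => by rw [hA1])
  -- deriv τ tends to K₀
  have hτ0 : τ c₁ = 0 := by
    have h := (hτe.def one_pos).self_of_nhds
    have h2 : ‖τ c₁‖ ≤ 0 := by simpa using h
    exact norm_le_zero_iff.mp h2
  have hτK : HasDerivAt τ K₀ c₁ := by
    rw [hasDerivAt_iff_isLittleO]
    refine hτe.congr' ?_ EventuallyEq.rfl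
    filter_upwards with z
    rw [hτ0, smul_eq_mul]
    ring
  have hτd : Tendsto (fun n => deriv τ (c n)) atTop (nhds K₀) := by
    have hcb : ContinuousAt (deriv τ) c₁ :=
      ((hτa.deriv) c₁ (Metric.mem_ball_self hρ)).continuousAt
    have := hcb.tendsto.comp hcc
    rwa [hτK.deriv] at this
  -- Part (i)
  have hi1 : Tendsto (fun n => μ (c n) ^ n * deriv τ (c n) / (K₀ * μ₁ ^ n))
      atTop (nhds 1) := by
    have h1 := (hAone id (fun n => le_rfl)).mul (hτd.div_const K₀)
    rw [one_mul, div_self hK] at h1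
    refine h1.congr (fun n => ?_)
    simp only [id]
    rw [div_pow, div_mul_div_comm, mul_comm (μ₁ ^ n) K₀]
  have hi2 : Tendsto (fun n => ‖μ (c n) ^ n * deriv τ (c n)‖)
      atTop atTop := by
    have h2 : Tendsto (fun n : ℕ => ‖K₀‖ * ‖μ₁‖ ^ n) atTop atTop :=
      (tendsto_pow_atTop_atTop_of_one_lt hμ₁n).const_mul_atTop (norm_pos_iff.mpr hK)
    have h3 : Tendsto (fun n : ℕ => (1/2 : ℝ) * (‖K₀‖ * ‖μ₁‖ ^ n)) atTop atTop :=
      h2.const_mul_atTop (by norm_num)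
    refine tendsto_atTop_mono' atTop ?_ h3
    have hhalf : ∀ᶠ n in atTop,
        (1/2 : ℝ) ≤ ‖μ (c n) ^ n * deriv τ (c n) / (K₀ * μ₁ ^ n)‖ := by
      have h4 := hi1.norm
      rw [norm_one] at h4
      exact h4.eventually (eventually_ge_nhds (by norm_num))
    filter_upwards [hhalf] with n hn
    have hne : K₀ * μ₁ ^ n ≠ 0 := mul_ne_zero hK (pow_ne_zero _ hμ₁0)
    have key : ‖μ (c n) ^ n * deriv τ (c n)‖ =
        ‖μ (c n) ^ n * deriv τ (c n) / (K₀ * μ₁ ^ n)‖ * (‖K₀‖ * ‖μ₁‖ ^ n) := by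
      have hKn : ‖K₀ * μ₁ ^ n‖ = ‖K₀‖ * ‖μ₁‖ ^ n := by rw [norm_mul, norm_pow]
      rw [norm_div, hKn, div_mul_cancel₀]
      exact mul_ne_zero (norm_ne_zero_iff.mpr hK)
        (pow_ne_zero _ (by linarith : (0:ℝ) < ‖μ₁‖).ne')
    rw [key]
    apply mul_le_mul_of_nonneg_right hn
    positivity
  -- Part (ii)
  obtain ⟨β, hβ⟩ : ∃ β, α = β + 1 := ⟨α - 1, (Nat.succ_pred_eq_of_pos hα).symm⟩
  subst hβ
  have hμan : AnalyticAt ℂ μ c₁ := hμa c₁ (Metric.mem_ball_self hρ)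
  have hfan : AnalyticAt ℂ (fun z => μ z - μ₁ - M₀ * (z - c₁) ^ (β + 1)) c₁ :=
    (hμan.sub analyticAt_const).sub
      (analyticAt_const.mul ((analyticAt_id.sub analyticAt_const).pow _))
  obtain ⟨g, hg, hgeq⟩ := aux_factor (β + 1) _ c₁ hfan hμe
  obtain ⟨rg, hrg, hgOn⟩ := hg.exists_ball_analyticOnNhd
  have hgc : ContinuousAt g c₁ := hg.continuousAt
  have hg'c : ContinuousAt (deriv g) c₁ :=
    ((hgOn.deriv) c₁ (Metric.mem_ball_self hrg)).continuousAt
  have hder : ∀ᶠ z in nhds c₁, deriv μ z =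
      M₀ * ((β : ℂ) + 1) * (z - c₁) ^ β +
        (z - c₁) ^ (β + 1) * (((β : ℂ) + 2) * g z + (z - c₁) * deriv g z) := by
    obtain ⟨s, hs_sub, hs_open, hs_mem⟩ :=
      eventually_nhds_iff.mp (hgeq.and hg.eventually_analyticAt)
    rw [eventually_nhds_iff]
    refine ⟨s, fun z hz => ?_, hs_open, hs_mem⟩
    obtain ⟨hzeq, hzg⟩ := hs_sub z hz
    have hev : μ =ᶠ[nhds z]
        fun w => μ₁ + M₀ * (w - c₁) ^ (β + 1) + (w - c₁) ^ (β + 1 + 1) * g w := by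
      filter_upwards [hs_open.mem_nhds hz] with w hw
      have h := (hs_sub w hw).1
      linear_combination h
    rw [hev.deriv_eq]
    have hid : HasDerivAt (fun w : ℂ => w - c₁) 1 z := (hasDerivAt_id z).sub_const c₁
    have h1 : HasDerivAt (fun w : ℂ => (w - c₁) ^ (β + 1))
        (((β : ℂ) + 1) * (z - c₁) ^ β * 1) z := by
      have h : HasDerivAt (fun w : ℂ => (w - c₁) ^ (β + 1)) _ z := hid.pow (β + 1)
      simp only [Nat.add_sub_cancel] at h
      convert h using 2
      push_cast
      ring
    have h2 : HasDerivAt (fun w : ℂ => (w - c₁) ^ (β + 1 + 1))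
        (((β : ℂ) + 2) * (z - c₁) ^ (β + 1) * 1) z := by
      have h : HasDerivAt (fun w : ℂ => (w - c₁) ^ (β + 1 + 1)) _ z := hid.pow (β + 1 + 1)
      simp only [Nat.add_sub_cancel] at h
      convert h using 2
      push_cast
      ring
    have hgz : HasDerivAt g (deriv g z) z := hzg.differentiableAt.hasDerivAt
    have h4 := ((hasDerivAt_const z μ₁).add (h1.const_mul M₀)).add (h2.mul hgz)
    rw [HasDerivAt.deriv (f := fun w => μ₁ + M₀ * (w - c₁) ^ (β + 1) + (w - c₁) ^ (β + 1 + 1) * g w) h4]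
    ring
  have hμcomp : ∀ᶠ n in atTop, deriv μ (c n) =
      M₀ * ((β : ℂ) + 1) * (c n - c₁) ^ β +
        (c n - c₁) ^ (β + 1) * (((β : ℂ) + 2) * g (c n) + (c n - c₁) * deriv g (c n)) :=
    hcc.eventually hder
  have hF : Tendsto (fun n => ((β : ℂ) + 2) * g (c n) + (c n - c₁) * deriv g (c n)) atTop
      (nhds (((β : ℂ) + 2) * g c₁ + 0 * deriv g c₁)) :=
    (tendsto_const_nhds.mul (hgc.tendsto.comp hcc)).add (hw0.mul (hg'c.tendsto.comp hcc))
  have hβ1 : ((β : ℂ) + 1) ≠ 0 := Nat.cast_add_one_ne_zero β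
  have hsmall : Tendsto (fun n => (c n - c₁) *
      ((((β : ℂ) + 2) * g (c n) + (c n - c₁) * deriv g (c n)) / (M₀ * ((β : ℂ) + 1))))
      atTop (nhds 0) := by
    have h := hw0.mul (hF.div_const (M₀ * ((β : ℂ) + 1)))
    simpa using h
  have hMder : Tendsto (fun n => deriv μ (c n) / (M₀ * ((β : ℂ) + 1) * (c n - c₁) ^ β))
      atTop (nhds 1) := by
    have hlim := (tendsto_const_nhds (x := (1 : ℂ)) (f := atTop (α := ℕ))).add hsmall
    rw [add_zero] at hlim
    refine hlim.congr' ?_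
    filter_upwards [hμcomp, hwne] with n heq hwn
    rw [heq]
    field_simp [pow_ne_zero β hwn]
    ring
  have hτo : (fun n => τ (c n) - K₀ * (c n - c₁)) =o[atTop] d :=
    (hτe.comp_tendsto hcc).trans_isBigO hwO
  have hτdiv : Tendsto (fun n => (τ (c n) - K₀ * (c n - c₁)) / d n) atTop (nhds 0) :=
    hτo.tendsto_div_nhds_zero
  have hτr : Tendsto (fun n => τ (c n) / (K₀ * d n)) atTop (nhds 1) := by
    have h := hc.add (hτdiv.mul_const K₀⁻¹)
    rw [zero_mul, add_zero] at h
    refine h.congr (fun n => ?_)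
    field_simp [hdne n]
    ring
  have hq' : Tendsto (fun n => ((c n - c₁) / d n) ^ β) atTop (nhds 1) := by
    simpa using hc.pow β
  have hA2 := hAone (fun n => n - 1) (fun n => Nat.sub_le n 1)
  have hP : Tendsto (fun n => (μ (c n) / μ₁) ^ (n - 1) *
      (deriv μ (c n) / (M₀ * ((β : ℂ) + 1) * (c n - c₁) ^ β)) *
      (τ (c n) / (K₀ * d n)) * ((c n - c₁) / d n) ^ β) atTop (nhds 1) := by
    have h := ((hA2.mul hMder).mul hτr).mul hq'
    simpa using h
  have hii1 : Filter.Tendsto (fun n : ℕ =>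
      ((n : ℂ) * μ (c n) ^ (n - 1) * deriv μ (c n) * τ (c n)) /
        ((n : ℂ) * μ₁ ^ (n - 1) * M₀ * K₀ * ((β + 1 : ℕ) : ℂ) * d n ^ (β + 1)))
      Filter.atTop (nhds 1) := by
    refine hP.congr' ?_
    filter_upwards [hwne, eventually_ge_atTop 1] with n hwn hn1
    have hnC : (n : ℂ) ≠ 0 := Nat.cast_ne_zero.mpr (by omega)
    have hdn := hdne n
    have hwβ : (c n - c₁) ^ β ≠ 0 := pow_ne_zero _ hwn
    have hdβ : d n ^ β ≠ 0 := pow_ne_zero _ hdn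
    have hμ₁p : μ₁ ^ (n - 1) ≠ 0 := pow_ne_zero _ hμ₁0
    have hden1 : μ₁ ^ (n - 1) * (M₀ * ((β : ℂ) + 1) * (c n - c₁) ^ β) * (K₀ * d n) *
        d n ^ β ≠ 0 :=
      mul_ne_zero (mul_ne_zero (mul_ne_zero hμ₁p
        (mul_ne_zero (mul_ne_zero hM hβ1) hwβ)) (mul_ne_zero hK hdn)) hdβ
    have hden2 : (n : ℂ) * μ₁ ^ (n - 1) * M₀ * K₀ * ((β : ℂ) + 1) * d n ^ (β + 1) ≠ 0 :=
      mul_ne_zero (mul_ne_zero (mul_ne_zero (mul_ne_zero (mul_ne_zero hnC hμ₁p) hM) hK)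
        hβ1) (pow_ne_zero _ hdn)
    push_cast
    rw [div_pow, div_pow, div_mul_div_comm, div_mul_div_comm, div_mul_div_comm,
      div_eq_div_iff hden1 hden2]
    ring
  refine ⟨⟨hi1, hi2⟩, hii1, ?_, ?_⟩
  · intro h1
    have hβ0 : β = 0 := by omega
    subst hβ0
    rw [isBigO_iff]
    refine ⟨2 * ‖M₀ * z₀ / μ₁‖, ?_⟩
    have hev2 : ∀ᶠ (n : ℕ) in atTop, ‖((n : ℂ) * μ (c n) ^ (n - 1) * deriv μ (c n) * τ (c n)) /
        ((n : ℂ) * μ₁ ^ (n - 1) * M₀ * K₀ * ((0 + 1 : ℕ) : ℂ) * d n ^ (0 + 1))‖ ≤ 2 := by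
      have h := hii1.norm
      rw [norm_one] at h
      exact h.eventually (eventually_le_nhds (by norm_num))
    filter_upwards [hev2, eventually_ge_atTop 1] with n hn hn1
    have hnC : (n : ℂ) ≠ 0 := Nat.cast_ne_zero.mpr (by omega)
    have hDval : (n : ℂ) * μ₁ ^ (n - 1) * M₀ * K₀ * ((0 + 1 : ℕ) : ℂ) * d n ^ (0 + 1) =
        (n : ℂ) * (M₀ * z₀ / μ₁) := by
      rw [hd n]
      have hμn : μ₁ ^ (n - 1) * μ₁ = μ₁ ^ n := by
        rw [← pow_succ, Nat.sub_add_cancel hn1]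
      rw [← hμn]
      simp only [Nat.zero_add, pow_one, Nat.cast_one, mul_one]
      rw [← mul_div_assoc, ← mul_div_assoc,
        div_eq_div_iff (mul_ne_zero (mul_ne_zero (pow_ne_zero _ hμ₁0) hμ₁0) hK) hμ₁0]
      ring
    have hDne : (n : ℂ) * μ₁ ^ (n - 1) * M₀ * K₀ * ((0 + 1 : ℕ) : ℂ) * d n ^ (0 + 1) ≠ 0 := by
      rw [hDval]
      exact mul_ne_zero hnC (div_ne_zero (mul_ne_zero hM hz₀) hμ₁0)
    have hNeq : (n : ℂ) * μ (c n) ^ (n - 1) * deriv μ (c n) * τ (c n) =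
        (((n : ℂ) * μ (c n) ^ (n - 1) * deriv μ (c n) * τ (c n)) /
          ((n : ℂ) * μ₁ ^ (n - 1) * M₀ * K₀ * ((0 + 1 : ℕ) : ℂ) * d n ^ (0 + 1))) *
        ((n : ℂ) * μ₁ ^ (n - 1) * M₀ * K₀ * ((0 + 1 : ℕ) : ℂ) * d n ^ (0 + 1)) :=
      (div_mul_cancel₀ _ hDne).symm
    have hDnormv : ‖(n : ℂ) * μ₁ ^ (n - 1) * M₀ * K₀ * ((0 + 1 : ℕ) : ℂ) * d n ^ (0 + 1)‖ =
        (n : ℝ) * ‖M₀ * z₀ / μ₁‖ := by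
      rw [hDval, norm_mul, Complex.norm_natCast]
    rw [hNeq, norm_mul, hDnormv, Real.norm_natCast]
    calc ‖((n : ℂ) * μ (c n) ^ (n - 1) * deriv μ (c n) * τ (c n)) /
        ((n : ℂ) * μ₁ ^ (n - 1) * M₀ * K₀ * ((0 + 1 : ℕ) : ℂ) * d n ^ (0 + 1))‖ *
          ((n : ℝ) * ‖M₀ * z₀ / μ₁‖) ≤ 2 * ((n : ℝ) * ‖M₀ * z₀ / μ₁‖) := by
          apply mul_le_mul_of_nonneg_right hn
          positivity
    _ = 2 * ‖M₀ * z₀ / μ₁‖ * (n : ℝ) := by ring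
  · intro h2
    have hD0 : Tendsto (fun n : ℕ => (n : ℂ) * μ₁ ^ (n - 1) * M₀ * K₀ * ((β + 1 : ℕ) : ℂ) *
        d n ^ (β + 1)) atTop (nhds 0) := by
      rw [tendsto_zero_iff_norm_tendsto_zero]
      have hpow := tendsto_pow_const_div_const_pow_of_one_lt 1 hμ₁n
      have hCmul := hpow.const_mul (‖M₀‖ * ‖K₀‖ * ((β : ℝ) + 1) * ‖z₀ / K₀‖ ^ (β + 1))
      rw [mul_zero] at hCmul
      refine squeeze_zero' (Eventually.of_forall fun n => norm_nonneg _) ?_ hCmul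
      filter_upwards with n
      have hμpos : (0 : ℝ) < ‖μ₁‖ := by linarith
      have hnorm : ‖(n : ℂ) * μ₁ ^ (n - 1) * M₀ * K₀ * ((β + 1 : ℕ) : ℂ) * d n ^ (β + 1)‖
          = (n : ℝ) * ‖μ₁‖ ^ (n - 1) * ‖M₀‖ * ‖K₀‖ * ((β : ℝ) + 1) * ‖d n‖ ^ (β + 1) := by
        rw [norm_mul, norm_mul, norm_mul, norm_mul, norm_mul, norm_pow, norm_pow,
          Complex.norm_natCast, Complex.norm_natCast]
        push_cast
        ring
      rw [hnorm, hdnorm n]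
      have hs0 : (0 : ℝ) ≤ ‖μ₁‖⁻¹ := by positivity
      have hs1' : ‖μ₁‖⁻¹ ≤ 1 := inv_le_one_of_one_le₀ (le_of_lt hμ₁n)
      have key1 : ‖μ₁‖ ^ (n - 1) ≤ ‖μ₁‖ ^ n :=
        pow_le_pow_right₀ (le_of_lt hμ₁n) (Nat.sub_le n 1)
      have key2 : (‖μ₁‖⁻¹ ^ n) ^ (β + 1) ≤ (‖μ₁‖⁻¹ ^ n) ^ 2 :=
        pow_le_pow_of_le_one (by positivity) (pow_le_one₀ hs0 hs1') (by omega)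
      have hfin : (n : ℝ) * ‖μ₁‖ ^ n * ‖M₀‖ * ‖K₀‖ * ((β : ℝ) + 1) *
          (‖z₀ / K₀‖ ^ (β + 1) * (‖μ₁‖⁻¹ ^ n) ^ 2) =
          ‖M₀‖ * ‖K₀‖ * ((β : ℝ) + 1) * ‖z₀ / K₀‖ ^ (β + 1) * ((n : ℝ) ^ 1 / ‖μ₁‖ ^ n) := by
        have ht : ‖μ₁‖ ^ n * ((‖μ₁‖ ^ n)⁻¹) ^ 2 = (‖μ₁‖ ^ n)⁻¹ := by
          have hne : ‖μ₁‖ ^ n ≠ 0 := by positivity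
          field_simp
        rw [inv_pow, pow_one, div_eq_mul_inv (n:ℝ) (‖μ₁‖ ^ n)]
        linear_combination ((n : ℝ) * ‖M₀‖ * ‖K₀‖ * ((β : ℝ) + 1) * ‖z₀ / K₀‖ ^ (β + 1)) * ht
      calc (n : ℝ) * ‖μ₁‖ ^ (n - 1) * ‖M₀‖ * ‖K₀‖ * ((β : ℝ) + 1) *
          (‖z₀ / K₀‖ * ‖μ₁‖⁻¹ ^ n) ^ (β + 1)
          ≤ (n : ℝ) * ‖μ₁‖ ^ n * ‖M₀‖ * ‖K₀‖ * ((β : ℝ) + 1) *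
            (‖z₀ / K₀‖ ^ (β + 1) * (‖μ₁‖⁻¹ ^ n) ^ 2) := by
            rw [mul_pow]
            gcongr
          _ = ‖M₀‖ * ‖K₀‖ * ((β : ℝ) + 1) * ‖z₀ / K₀‖ ^ (β + 1) *
              ((n : ℝ) ^ 1 / ‖μ₁‖ ^ n) := hfin
    have hmul := hii1.mul hD0
    rw [one_mul] at hmul
    refine hmul.congr' ?_
    filter_upwards [eventually_ge_atTop 1] with n hn1
    have hnC : (n : ℂ) ≠ 0 := Nat.cast_ne_zero.mpr (by omega)
    have hDne : (n : ℂ) * μ₁ ^ (n - 1) * M₀ * K₀ * ((β + 1 : ℕ) : ℂ) * d n ^ (β + 1) ≠ 0 := by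
      exact mul_ne_zero (mul_ne_zero (mul_ne_zero (mul_ne_zero
        (mul_ne_zero hnC (pow_ne_zero _ hμ₁0)) hM) hK)
        (by exact_mod_cast hβ1)) (pow_ne_zero _ (hdne n))
    exact div_mul_cancel₀ _ hDne
end

section
/- Let g : D(w₀, R/2) → ℂ be a univalent branch of the inverse of f_c(z) = z² + c + u(z), where |c| + |u| ≤ r + δ on the relevant domain and |w₀| = R with R > 8 > 2(r+δ). Then for w ∈ D(w₀, R/2) one can write log g(w) = (1/2) log w + Υ(w) where Υ(w) = (1/2) log(1 − (c + u(g(w)))/w) satisfies |Υ(w)| ≤ C/R for a constant C depending only on r + δ (for suitable branches of logarithm), and consequently by the Schwarz lemma |Υ'(w)| ≤ C'/R² on the circle |w| = R. -/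
open Metric

/-- For a univalent inverse branch `g` of `f_c(z) = z² + c + u(z)` on `D(w₀, R/2)`
with `|w₀| = R`, `R > 8 > 2(r+δ)`, one has `g(w)² = w·exp(2Υ(w))` with
`Υ(w) = (1/2)log(1 - (c+u(g(w)))/w)` satisfying `|Υ(w)| ≤ C/R` for a constant `C`
depending only on `r + δ`, and `|Υ'(w)| ≤ C'/R²` by the Schwarz lemma. -/
theorem stmt10 (r δ : ℝ) (hr : 0 < r) (hδ : 0 < δ) (hrδ : 2 * (r + δ) < 8) :
    ∃ C > 0, ∃ C' > 0, ∀ R : ℝ, 8 < R → ∀ (w₀ c : ℂ) (u g : ℂ → ℂ),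
      ‖w₀‖ = R → ‖c‖ ≤ r →
      (∀ z : ℂ, ‖u z‖ ≤ δ) →
      AnalyticOnNhd ℂ g (Metric.ball w₀ (R / 2)) →
      Set.InjOn g (Metric.ball w₀ (R / 2)) →
      (∀ w ∈ Metric.ball w₀ (R / 2), (g w) ^ 2 + c + u (g w) = w) →
      (∀ w ∈ Metric.ball w₀ (R / 2),
          ‖(1 / 2 : ℂ) * Complex.log (1 - (c + u (g w)) / w)‖ ≤ C / R ∧
          (g w) ^ 2 = w * Complex.exp (2 * ((1 / 2 : ℂ) * Complex.log (1 - (c + u (g w)) / w)))) ∧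
      (∀ w ∈ Metric.ball w₀ (R / 4),
          ‖deriv (fun w' => (1 / 2 : ℂ) * Complex.log (1 - (c + u (g w')) / w')) w‖
            ≤ C' / R ^ 2) := by
  have hrδ4 : r + δ < 4 := by linarith
  set a : ℝ := (r + δ) / 4 with ha_def
  have ha0 : 0 < a := by positivity
  have ha1 : a < 1 := by rw [ha_def]; linarith
  set M : ℝ := a * (1 - a)⁻¹ / 2 + 1 with hM_def
  have h1a : 0 < 1 - a := by linarith
  have hM0 : 0 < M := by positivity
  set C : ℝ := M * (r + δ) with hC_def
  have hC0 : 0 < C := by positivity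
  refine ⟨C, hC0, 5 * C, by positivity, ?_⟩
  intro R hR w₀ c u g hw₀ hc hu hg hinj hfe
  have hR0 : (0 : ℝ) < R := by linarith
  -- lower bound on |w|
  have hwlb : ∀ w ∈ ball w₀ (R / 2), R / 2 ≤ ‖w‖ := by
    intro w hw
    rw [mem_ball, dist_eq_norm] at hw
    have h1 : ‖w₀‖ - ‖w‖ ≤ ‖w₀ - w‖ := norm_sub_norm_le _ _
    rw [norm_sub_rev] at h1
    rw [hw₀] at h1; linarith
  have hw0 : ∀ w ∈ ball w₀ (R / 2), w ≠ 0 := by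
    intro w hw h0
    have := hwlb w hw; rw [h0, norm_zero] at this; linarith
  -- bound on x = (c + u (g w)) / w
  have hx2 : ∀ w ∈ ball w₀ (R / 2),
      ‖(c + u (g w)) / w‖ ≤ 2 * (r + δ) / R := by
    intro w hw
    rw [norm_div]
    have h1 : ‖c + u (g w)‖ ≤ r + δ :=
      (norm_add_le _ _).trans (add_le_add hc (hu _))
    have h2 := hwlb w hw
    calc ‖c + u (g w)‖ / ‖w‖ ≤ (r + δ) / (R / 2) := by
          apply div_le_div₀ (by positivity) h1 (by linarith) h2
      _ = 2 * (r + δ) / R := by field_simp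
  have hxa : ∀ w ∈ ball w₀ (R / 2), ‖(c + u (g w)) / w‖ ≤ a := by
    intro w hw
    refine (hx2 w hw).trans ?_
    rw [ha_def]
    rw [div_le_div_iff₀ hR0 (by norm_num)]
    nlinarith
  -- the main log bound
  have hbound : ∀ w ∈ ball w₀ (R / 2),
      ‖(1 / 2 : ℂ) * Complex.log (1 - (c + u (g w)) / w)‖ ≤ C / R := by
    intro w hw
    set x : ℂ := (c + u (g w)) / w with hx_def
    have hxa' := hxa w hw
    have hx2' := hx2 w hw
    have hx1 : ‖(-x)‖ < 1 := by
      rw [norm_neg]; linarith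
    have hlog : ‖Complex.log (1 + (-x))‖ ≤ ‖(-x)‖ ^ 2 * (1 - ‖(-x)‖)⁻¹ / 2 + ‖(-x)‖ :=
      Complex.norm_log_one_add_le hx1
    simp only [norm_neg] at hlog
    have hinv : (1 - ‖x‖)⁻¹ ≤ (1 - a)⁻¹ := by
      apply inv_anti₀ h1a; linarith
    have habs0 : 0 ≤ ‖x‖ := norm_nonneg x
    have hkey : ‖Complex.log (1 - x)‖ ≤ M * ‖x‖ := by
      rw [show (1 : ℂ) - x = 1 + (-x) by ring]
      refine hlog.trans ?_
      have e1 : ‖x‖ ^ 2 * (1 - ‖x‖)⁻¹ / 2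
          ≤ ‖x‖ * (a * (1 - a)⁻¹) / 2 := by
        have : ‖x‖ ^ 2 * (1 - ‖x‖)⁻¹
            ≤ ‖x‖ * (a * (1 - a)⁻¹) := by
          rw [sq]
          calc ‖x‖ * ‖x‖ * (1 - ‖x‖)⁻¹
              ≤ ‖x‖ * a * (1 - a)⁻¹ := by
                apply mul_le_mul (mul_le_mul le_rfl hxa' habs0 habs0) hinv
                  (inv_nonneg.mpr (by linarith)) (mul_nonneg habs0 ha0.le)
            _ = ‖x‖ * (a * (1 - a)⁻¹) := by ring
        linarith
      rw [hM_def]; linarith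
    rw [norm_mul]
    have : ‖(1 : ℂ) / 2‖ = 1 / 2 := by
      rw [norm_div, norm_one, Complex.norm_two]
    rw [this]
    calc 1 / 2 * ‖Complex.log (1 - x)‖
        ≤ 1 / 2 * (M * ‖x‖) := by
          exact mul_le_mul_of_nonneg_left hkey (by norm_num)
      _ ≤ 1 / 2 * (M * (2 * (r + δ) / R)) := by
          apply mul_le_mul_of_nonneg_left _ (by norm_num)
          exact mul_le_mul_of_nonneg_left hx2' hM0.le
      _ = C / R := by rw [hC_def]; field_simp
  constructor
  · intro w hw
    refine ⟨hbound w hw, ?_⟩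
    set x : ℂ := (c + u (g w)) / w with hx_def
    have hxa' := hxa w hw
    have hne : (1 : ℂ) - x ≠ 0 := by
      intro h
      have : ‖x‖ = 1 := by
        have : x = 1 := by linear_combination -h
        rw [this, norm_one]
      linarith
    have h2 : (2 : ℂ) * ((1 / 2 : ℂ) * Complex.log (1 - x)) = Complex.log (1 - x) := by
      ring
    rw [h2, Complex.exp_log hne]
    have hwne := hw0 w hw
    have : w * (1 - x) = w - (c + u (g w)) := by
      rw [hx_def]; field_simp
    rw [this]
    linear_combination hfe w hw
  · intro w hw
    set F : ℂ → ℂ := fun w' => (1 / 2 : ℂ) * Complex.log (1 - (c + u (g w')) / w') with hF_def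
    -- F is differentiable on the big ball
    have hFdiff : ∀ w' ∈ ball w₀ (R / 2), DifferentiableAt ℂ F w' := by
      intro w' hw'
      set H : ℂ → ℂ := fun z => (1 / 2 : ℂ) * Complex.log (1 - (z - g z ^ 2) / z) with hH_def
      have hEq : F =ᶠ[nhds w'] H := by
        filter_upwards [isOpen_ball.mem_nhds hw'] with z hz
        have : c + u (g z) = z - g z ^ 2 := by linear_combination hfe z hz
        simp only [hF_def, hH_def, this]
      have hHdiff : DifferentiableAt ℂ H w' := by
        have hgz : DifferentiableAt ℂ g w' := (hg w' hw').differentiableAt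
        have hzne : w' ≠ 0 := hw0 w' hw'
        have hinner : DifferentiableAt ℂ (fun z => 1 - (z - g z ^ 2) / z) w' :=
          (differentiableAt_const _).sub
            (((differentiableAt_id.sub (hgz.pow 2))).div differentiableAt_id hzne)
        have hslit : (1 - (w' - g w' ^ 2) / w') ∈ Complex.slitPlane := by
          have heq : (w' - g w' ^ 2) / w' = (c + u (g w')) / w' := by
            have : c + u (g w') = w' - g w' ^ 2 := by linear_combination hfe w' hw'
            rw [this]
          rw [Complex.mem_slitPlane_iff]
          left
          have habs : ‖(w' - g w' ^ 2) / w'‖ ≤ a := by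
            rw [heq]; exact hxa w' hw'
          have hre : |((w' - g w' ^ 2) / w').re| ≤ a :=
            (Complex.abs_re_le_norm _).trans habs
          have := abs_le.mp hre
          simp only [Complex.sub_re, Complex.one_re]
          linarith [this.2]
        exact ((Complex.differentiableAt_log hslit).comp w' hinner).const_mul _
      exact hHdiff.congr_of_eventuallyEq hEq
    -- apply Cauchy estimate on ball w (R/5)
    have hρ : (0 : ℝ) < R / 5 := by linarith
    have hsub : closedBall w (R / 5) ⊆ ball w₀ (R / 2) := by
      intro z hz
      rw [mem_closedBall] at hz
      rw [mem_ball] at hw ⊢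
      calc dist z w₀ ≤ dist z w + dist w w₀ := dist_triangle _ _ _
        _ < R / 5 + R / 4 := by linarith
        _ < R / 2 := by linarith
    have hd : DiffContOnCl ℂ F (ball w (R / 5)) := by
      constructor
      · intro z hz
        exact (hFdiff z (hsub (ball_subset_closedBall hz))).differentiableWithinAt
      · intro z hz
        have hz' : z ∈ closedBall w (R / 5) := closure_ball_subset_closedBall hz
        exact (hFdiff z (hsub hz')).continuousAt.continuousWithinAt
    have hsb : ∀ z ∈ sphere w (R / 5), ‖F z‖ ≤ C / R := by
      intro z hz
      have hz' : z ∈ closedBall w (R / 5) := sphere_subset_closedBall hz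
      exact hbound z (hsub hz')
    have := Complex.norm_deriv_le_of_forall_mem_sphere_norm_le hρ hd hsb
    calc ‖deriv F w‖ ≤ C / R / (R / 5) := this
      _ = 5 * C / R ^ 2 := by field_simp
end

section
/- Let c₁ ∈ ℂ, B₀ ≠ 0, ν ≥ 2 an integer, and let h be a bounded holomorphic function on a punctured neighborhood of c₁. Define c(n) := 2πi/(ν² B₀ n) and r_n := |c(n)|^{1+β} for fixed β ∈ (0,1). Then for all sufficiently large n, on the circle |c − (c₁ + c(n))| = r_n one has |−2πi/(ν² B₀ (c − c₁)) + n| ≥ C' n^{1−β} for some C' > 0, and in particular the equation −2πi/(ν² B₀ (c − c₁)) + n + h(c) = 0 has exactly one solution in the disk D(c₁ + c(n), r_n), by Rouché's theorem. -/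
open Filter Metric

set_option maxHeartbeats 3200000 in
/-- Rouché argument in the parabolic case `ν ≥ 2`: with `c(n) = 2πi/(ν²B₀n)` and
`r_n = |c(n)|^(1+β)`, on the circle `|c - (c₁+c(n))| = r_n` the main term
`-2πi/(ν²B₀(c-c₁)) + n` is bounded below by `C'n^(1-β)`, and the equation
`-2πi/(ν²B₀(c-c₁)) + n + h(c) = 0` has exactly one solution in `D(c₁+c(n), r_n)`. -/
theorem stmt14 (c₁ B₀ : ℂ) (hB : B₀ ≠ 0) (ν : ℕ) (hν : 2 ≤ ν)
    (β : ℝ) (hβ : β ∈ Set.Ioo 0 1) (ρ C : ℝ) (hρ : 0 < ρ) (hC : 0 ≤ C)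
    (h : ℂ → ℂ)
    (hha : AnalyticOnNhd ℂ h (Metric.ball c₁ ρ \ {c₁}))
    (hhb : ∀ c ∈ Metric.ball c₁ ρ \ {c₁}, ‖h c‖ ≤ C)
    (cn : ℕ → ℂ)
    (hcn : ∀ n : ℕ, cn n = 2 * Real.pi * Complex.I / ((ν : ℂ) ^ 2 * B₀ * n))
    (rn : ℕ → ℝ) (hrn : ∀ n : ℕ, rn n = ‖cn n‖ ^ ((1:ℝ) + β)) :
    ∃ C' > 0, ∀ᶠ n in Filter.atTop,
      (∀ c : ℂ, ‖c - (c₁ + cn n)‖ = rn n →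
        C' * (n : ℝ) ^ ((1:ℝ) - β)
          ≤ ‖-(2 * Real.pi * Complex.I) / ((ν : ℂ) ^ 2 * B₀ * (c - c₁)) + n‖) ∧
      (∃! c : ℂ, c ∈ Metric.ball (c₁ + cn n) (rn n) ∧
        -(2 * Real.pi * Complex.I) / ((ν : ℂ) ^ 2 * B₀ * (c - c₁)) + n + h c = 0) := by
  obtain ⟨hβ0, hβ1⟩ := hβ
  have hν2 : (2:ℝ) ≤ (ν:ℝ) := by exact_mod_cast hν
  have hB0 : 0 < ‖B₀‖ := norm_pos_iff.mpr hB
  set K : ℝ := 2 * Real.pi / ((ν : ℝ) ^ 2 * ‖B₀‖) with hKdef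
  have hK : 0 < K := by
    apply div_pos (by positivity)
    have : (0:ℝ) < (ν:ℝ) := by linarith
    positivity
  have hKb : 0 < K ^ β := Real.rpow_pos_of_pos hK β
  -- |cn n| = K / n
  have habs : ∀ n : ℕ, ‖cn n‖ = K / n := by
    intro n
    rw [hcn n]
    simp only [norm_div, norm_mul, norm_pow, Complex.norm_two, Complex.norm_real, Real.norm_eq_abs,
      Complex.norm_I, Complex.norm_natCast, abs_of_pos Real.pi_pos, mul_one]
    rw [hKdef, div_div]
  -- eventual facts
  have evK : Tendsto (fun n : ℕ => K / n) atTop (nhds 0) :=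
    tendsto_const_div_atTop_nhds_zero_nat K
  have ev3 : ∀ᶠ n : ℕ in atTop, K / n < ρ / 2 := evK.eventually (gt_mem_nhds (by positivity))
  have evpow : Tendsto (fun n : ℕ => (n:ℝ) ^ β) atTop atTop :=
    (tendsto_rpow_atTop hβ0).comp tendsto_natCast_atTop_atTop
  have ev2 : ∀ᶠ n : ℕ in atTop, 4 * K ^ β < (n:ℝ) ^ β := evpow.eventually_gt_atTop _
  have evpow2 : Tendsto (fun n : ℕ => (n:ℝ) ^ ((1:ℝ) - β)) atTop atTop :=
    (tendsto_rpow_atTop (by linarith)).comp tendsto_natCast_atTop_atTop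
  have ev5 : ∀ᶠ n : ℕ in atTop, 2 * C / K ^ β + 1 ≤ (n:ℝ) ^ ((1:ℝ) - β) :=
    evpow2.eventually_ge_atTop _
  have evn : Tendsto (fun n : ℕ => (n:ℝ)) atTop atTop := tendsto_natCast_atTop_atTop
  have ev4 : ∀ᶠ n : ℕ in atTop, 2 * C + 2 ≤ (n:ℝ) := evn.eventually_ge_atTop _
  have ev6 : ∀ᶠ n : ℕ in atTop, 32 * C + 16 ≤ (n:ℝ) := evn.eventually_ge_atTop _
  refine ⟨K ^ β / 2, by positivity, ?_⟩
  filter_upwards [eventually_ge_atTop 1, ev2, ev3, ev4, ev5, ev6]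
    with n hn1 hn2 hn3 hn4 hn5 hn6
  -- basic per-n facts
  have hn1' : (1:ℝ) ≤ (n:ℝ) := by exact_mod_cast hn1
  have hnpos : (0:ℝ) < (n:ℝ) := lt_of_lt_of_le one_pos hn1'
  have hnbpos : 0 < (n:ℝ) ^ β := Real.rpow_pos_of_pos hnpos β
  set a : ℂ := cn n with hadef
  have ha : ‖a‖ = K / n := habs n
  have hapos : 0 < K / (n:ℝ) := div_pos hK hnpos
  have hane : a ≠ 0 := by
    intro h0
    rw [h0, norm_zero] at ha
    exact absurd ha.symm (ne_of_gt hapos)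
  set r : ℝ := rn n with hrdef
  have hr : r = (K / n) ^ ((1:ℝ) + β) := by rw [hrdef, hrn n, ha]
  have hrpos : 0 < r := hr ▸ Real.rpow_pos_of_pos hapos _
  have hKnb : (K / (n:ℝ)) ^ β = K ^ β / (n:ℝ) ^ β := Real.div_rpow hK.le (Nat.cast_nonneg n) β
  have hb4 : (K / (n:ℝ)) ^ β < 1 / 4 := by
    rw [hKnb, div_lt_iff₀ hnbpos]
    linarith
  have hrr : r = (K / n) * ((K / (n:ℝ)) ^ β) := by
    rw [hr, Real.rpow_add hapos, Real.rpow_one]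
  have hr_lt : r < (K / n) / 4 := by
    rw [hrr]
    calc (K / (n:ℝ)) * ((K / (n:ℝ)) ^ β) < (K / n) * (1/4) := by
          exact mul_lt_mul_of_pos_left hb4 hapos
      _ = (K / n) / 4 := by ring
  -- geometric containment
  have hsub : closedBall (c₁ + a) (3 * (K / n) / 4) ⊆ ball c₁ ρ \ {c₁} := by
    intro z hz
    rw [mem_closedBall, Complex.dist_eq] at hz
    have e : z - c₁ = (z - (c₁ + a)) + a := by ring
    have habs2 : ‖z - c₁‖ ≤ ‖z - (c₁ + a)‖ + ‖a‖ := by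
      rw [e]; exact norm_add_le _ _
    have habs3 : ‖a‖ - ‖z - (c₁ + a)‖ ≤ ‖z - c₁‖ := by
      have e2 : ‖a‖ ≤ ‖z - c₁‖ + ‖z - (c₁ + a)‖ := by
        calc ‖a‖ = ‖(z - c₁) + (-(z - (c₁ + a)))‖ := by congr 1; ring
          _ ≤ ‖z - c₁‖ + ‖-(z - (c₁ + a))‖ := norm_add_le _ _
          _ = ‖z - c₁‖ + ‖z - (c₁ + a)‖ := by rw [norm_neg]
      linarith
    constructor
    · rw [mem_ball, Complex.dist_eq]
      rw [ha] at habs2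
      linarith
    · simp only [Set.mem_singleton_iff]
      intro h0
      rw [ha] at habs3
      have : ‖z - c₁‖ = 0 := by rw [h0, sub_self, norm_zero]
      rw [this] at habs3
      linarith
  have hDsub : closedBall (c₁ + a) r ⊆ closedBall (c₁ + a) (3 * (K / n) / 4) :=
    closedBall_subset_closedBall (by linarith)
  have hDU : closedBall (c₁ + a) r ⊆ ball c₁ ρ \ {c₁} := hDsub.trans hsub
  -- denominator bound
  have hden : ∀ z ∈ closedBall (c₁ + a) r, (n:ℝ)/2 + 1 ≤ ‖(n:ℂ) + h z‖ := by
    intro z hz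
    have hhz := hhb z (hDU hz)
    have e : ‖(n:ℂ)‖ ≤ ‖(n:ℂ) + h z‖ + ‖h z‖ := by
      calc ‖(n:ℂ)‖ = ‖((n:ℂ) + h z) + (-(h z))‖ := by congr 1; ring
        _ ≤ ‖(n:ℂ) + h z‖ + ‖-(h z)‖ := norm_add_le _ _
        _ = ‖(n:ℂ) + h z‖ + ‖h z‖ := by rw [norm_neg]
    rw [Complex.norm_natCast] at e
    linarith
  have hdenne : ∀ z ∈ closedBall (c₁ + a) r, (n:ℂ) + h z ≠ 0 := by
    intro z hz h0
    have := hden z hz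
    rw [h0, norm_zero] at this
    linarith
  -- the fixed point map
  set g : ℂ → ℂ := fun z => c₁ + (n:ℂ) * a / ((n:ℂ) + h z) with hg
  have hnC : ((n:ℂ)) ≠ 0 := Nat.cast_ne_zero.mpr (by omega)
  have hrpowid : (n:ℝ) ^ ((1:ℝ) - β) * (n:ℝ) ^ β = (n:ℝ) := by
    rw [← Real.rpow_add hnpos]
    norm_num
  -- key numeric inequality for the self-map
  have hkey : C * (n:ℝ) ^ β < K ^ β * ((n:ℝ)/2 + 1) := by
    have h5' : (2 * C / K ^ β + 1) * (n:ℝ) ^ β ≤ (n:ℝ) := by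
      calc (2 * C / K ^ β + 1) * (n:ℝ) ^ β ≤ (n:ℝ) ^ ((1:ℝ) - β) * (n:ℝ) ^ β :=
            mul_le_mul_of_nonneg_right hn5 hnbpos.le
        _ = (n:ℝ) := hrpowid
    have h5'' := mul_le_mul_of_nonneg_left h5' hKb.le
    have hcanc : K ^ β * (2 * C / K ^ β) = 2 * C := by field_simp
    nlinarith [hnbpos, hKb]
  -- self-map property
  have hmap : ∀ z ∈ closedBall (c₁ + a) r, ‖g z - (c₁ + a)‖ < r := by
    intro z hz
    have hhz := hhb z (hDU hz)
    have hdz := hden z hz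
    have hdnz := hdenne z hz
    have e : g z - (c₁ + a) = -(a * h z) / ((n:ℂ) + h z) := by
      rw [hg]
      field_simp
      ring
    rw [e, norm_div, norm_neg, norm_mul]
    have hstep : ‖a‖ * ‖h z‖ / ‖(n:ℂ) + h z‖
        ≤ (K / n) * C / ((n:ℝ)/2 + 1) := by
      apply div_le_div₀ (by positivity)
        (mul_le_mul (le_of_eq ha) hhz (norm_nonneg _) hapos.le)
        (by linarith) hdz
    refine lt_of_le_of_lt hstep ?_
    rw [hrr, hKnb, mul_div_assoc]
    apply mul_lt_mul_of_pos_left _ hapos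
    rw [div_lt_div_iff₀ (by linarith) hnbpos]
    exact hkey
  -- Lipschitz bound for h on the disk, via the Schwarz lemma
  have hlip : ∀ z ∈ closedBall (c₁ + a) r, ∀ w ∈ closedBall (c₁ + a) r,
      ‖h z - h w‖ ≤ ((2*C+1) / (K / n / 2)) * ‖z - w‖ := by
    intro z hz w hw
    have hzU := hDU hz
    have hball : ball z (K / n / 2) ⊆ ball c₁ ρ \ {c₁} := by
      intro y hy
      apply hsub
      rw [mem_closedBall, Complex.dist_eq]
      rw [mem_ball, Complex.dist_eq] at hy
      rw [mem_closedBall, Complex.dist_eq] at hz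
      have e : y - (c₁ + a) = (y - z) + (z - (c₁ + a)) := by ring
      calc ‖y - (c₁ + a)‖ ≤ ‖y - z‖ + ‖z - (c₁ + a)‖ := by
            rw [e]; exact norm_add_le _ _
        _ ≤ 3 * (K / n) / 4 := by linarith
    have hd : DifferentiableOn ℂ h (ball z (K / n / 2)) := fun y hy =>
      ((hha y (hball hy)).differentiableAt).differentiableWithinAt
    have hmaps : Set.MapsTo h (ball z (K / n / 2)) (ball (h z) (2*C+1)) := by
      intro y hy
      rw [mem_ball]
      have h1 := hhb y (hball hy)
      have h2 := hhb z hzU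
      calc dist (h y) (h z) ≤ ‖h y‖ + ‖h z‖ := by
            rw [Complex.dist_eq]
            calc ‖h y - h z‖
                ≤ ‖h y - 0‖ + ‖0 - h z‖ := norm_sub_le_norm_sub_add_norm_sub _ 0 _
              _ = ‖h y‖ + ‖h z‖ := by
                  rw [sub_zero, zero_sub, norm_neg]
        _ < 2*C+1 := by linarith
    have hwz : w ∈ ball z (K / n / 2) := by
      rw [mem_ball, Complex.dist_eq]
      rw [mem_closedBall, Complex.dist_eq] at hz hw
      have e : w - z = (w - (c₁ + a)) + (-(z - (c₁ + a))) := by ring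
      calc ‖w - z‖
          ≤ ‖w - (c₁ + a)‖ + ‖-(z - (c₁ + a))‖ := by
            rw [e]; exact norm_add_le _ _
        _ = ‖w - (c₁ + a)‖ + ‖z - (c₁ + a)‖ := by
            rw [norm_neg]
        _ ≤ r + r := by linarith
        _ < K / n / 2 := by linarith
    have := Complex.dist_le_div_mul_dist_of_mapsTo_ball hd (hmaps.mono_right ball_subset_closedBall) hwz
    rw [Complex.dist_eq, Complex.dist_eq] at this
    calc ‖h z - h w‖ = ‖h w - h z‖ := by
          rw [← norm_neg]; congr 1; ring
      _ ≤ (2*C+1) / (K / n / 2) * ‖w - z‖ := this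
      _ = (2*C+1) / (K / n / 2) * ‖z - w‖ := by
          congr 1
          rw [← norm_neg]; congr 1; ring
  -- contraction property of g
  have hcontr : ∀ z ∈ closedBall (c₁ + a) r, ∀ w ∈ closedBall (c₁ + a) r,
      ‖g z - g w‖ ≤ (1/2) * ‖z - w‖ := by
    intro z hz w hw
    have hdz := hden z hz
    have hdw := hden w hw
    have hdnz := hdenne z hz
    have hdnw := hdenne w hw
    have e : g z - g w = (n:ℂ) * a * (h w - h z) / (((n:ℂ) + h z) * ((n:ℂ) + h w)) := by
      rw [hg]
      field_simp
      ring
    rw [e, norm_div, norm_mul, norm_mul, norm_mul, Complex.norm_natCast, ha]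
    have hLlip := hlip w hw z hz
    have hnum : (n:ℝ) * (K / n) * ‖h w - h z‖
        ≤ (4*C+2) * (n:ℝ) * ‖z - w‖ := by
      have e1 : (n:ℝ) * (K / n) = K := by field_simp
      rw [e1]
      have e2 : (2*C+1) / (K / n / 2) = (4*C+2) * (n:ℝ) / K := by
        field_simp
        ring
      calc K * ‖h w - h z‖ ≤ K * ((4*C+2) * (n:ℝ) / K * ‖w - z‖) := by
            apply mul_le_mul_of_nonneg_left _ hK.le
            rw [← e2]
            exact hlip w hw z hz
        _ = (4*C+2) * (n:ℝ) * ‖w - z‖ := by field_simp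
        _ = (4*C+2) * (n:ℝ) * ‖z - w‖ := by
            congr 1
            rw [← norm_neg]; congr 1; ring
    have hdenom : ((n:ℝ)/2 + 1) * ((n:ℝ)/2 + 1)
        ≤ ‖(n:ℂ) + h z‖ * ‖(n:ℂ) + h w‖ :=
      mul_le_mul hdz hdw (by linarith) (norm_nonneg _)
    calc (n:ℝ) * (K / n) * ‖h w - h z‖
          / (‖(n:ℂ) + h z‖ * ‖(n:ℂ) + h w‖)
        ≤ ((4*C+2) * (n:ℝ) * ‖z - w‖) / (((n:ℝ)/2 + 1) * ((n:ℝ)/2 + 1)) :=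
          div_le_div₀ (by positivity) hnum (by positivity) hdenom
      _ ≤ (1/2) * ‖z - w‖ := by
          rw [div_le_iff₀ (by positivity)]
          have h8 : 4*C+2 ≤ (n:ℝ)/8 := by linarith
          have hCn : (4*C+2) * (n:ℝ) ≤ 1/2 * (((n:ℝ)/2 + 1) * ((n:ℝ)/2 + 1)) := by
            nlinarith [mul_le_mul_of_nonneg_right h8 hnpos.le]
          have hfin := mul_le_mul_of_nonneg_right hCn (norm_nonneg (z - w))
          linarith [hfin]
  -- Banach fixed point on the closed ball
  have hmem : ∀ z ∈ closedBall (c₁ + a) r, g z ∈ closedBall (c₁ + a) r := by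
    intro z hz
    rw [mem_closedBall, Complex.dist_eq]
    exact (hmap z hz).le
  haveI : Nonempty (closedBall (c₁ + a) r) :=
    Set.Nonempty.to_subtype ⟨c₁ + a, mem_closedBall_self hrpos.le⟩
  haveI : CompleteSpace (closedBall (c₁ + a) r) :=
    (isClosed_closedBall (x := c₁ + a) (ε := r)).completeSpace_coe
  set G : (closedBall (c₁ + a) r) → (closedBall (c₁ + a) r) :=
    fun z => ⟨g z.1, hmem z.1 z.2⟩ with hG
  have hGlip : LipschitzWith (1/2 : NNReal) G := by
    apply LipschitzWith.of_dist_le_mul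
    intro x y
    have : dist (G x) (G y) = ‖g x.1 - g y.1‖ := by
      rw [Subtype.dist_eq, Complex.dist_eq]
    rw [this, Subtype.dist_eq, Complex.dist_eq]
    have h12 : ((1/2 : NNReal) : ℝ) = 1/2 := by norm_num
    rw [h12]
    exact hcontr x.1 x.2 y.1 y.2
  have hGc : ContractingWith (1/2 : NNReal) G :=
    ⟨by rw [← NNReal.coe_lt_coe]; norm_num, hGlip⟩
  set cs : ℂ := (ContractingWith.fixedPoint G hGc).1 with hcs
  have hcsD : cs ∈ closedBall (c₁ + a) r := (ContractingWith.fixedPoint G hGc).2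
  have hfix : g cs = cs := congrArg Subtype.val hGc.fixedPoint_isFixedPt
  -- algebraic identity: 2πI = ν²B₀ n a
  have hνne : ((ν:ℂ)) ≠ 0 := Nat.cast_ne_zero.mpr (by omega)
  have hνC2 : ((ν:ℂ)^2 * B₀) ≠ 0 := mul_ne_zero (pow_ne_zero _ hνne) hB
  have hνC : ((ν:ℂ)^2 * B₀ * (n:ℂ)) ≠ 0 := mul_ne_zero hνC2 hnC
  have h2pi : (2 * (Real.pi:ℂ) * Complex.I) = (ν:ℂ)^2 * B₀ * (n:ℂ) * a := by
    rw [hadef, hcn n, mul_div_cancel₀ _ hνC]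
  -- equivalence between the equation and the fixed-point equation
  have hiff : ∀ c : ℂ, c ∈ closedBall (c₁ + a) r →
      ((-(2 * Real.pi * Complex.I) / ((ν : ℂ) ^ 2 * B₀ * (c - c₁)) + n + h c = 0) ↔ c = g c) := by
    intro c hcD
    have hcU := hDU hcD
    have hcne : c - c₁ ≠ 0 := sub_ne_zero.mpr hcU.2
    have hdn := hdenne c hcD
    have key : -(2 * Real.pi * Complex.I) / ((ν : ℂ) ^ 2 * B₀ * (c - c₁)) + n + h c
        = (((n:ℂ) + h c) * (c - c₁) - (n:ℂ) * a) / (c - c₁) := by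
      rw [h2pi]
      field_simp
      ring
    rw [key, div_eq_zero_iff]
    constructor
    · rintro (h0 | h0)
      · have : ((n:ℂ) + h c) * (c - c₁) = (n:ℂ) * a := by linear_combination h0
        rw [hg]
        have : c - c₁ = (n:ℂ) * a / ((n:ℂ) + h c) := by
          rw [eq_div_iff hdn]
          linear_combination this
        linear_combination this
      · exact absurd h0 hcne
    · intro hcg
      left
      rw [hg] at hcg
      have : c - c₁ = (n:ℂ) * a / ((n:ℂ) + h c) := by linear_combination hcg
      rw [eq_div_iff hdn] at this
      linear_combination this
  constructor
  · -- lower bound on the circle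
    intro c hcirc
    have hcirc0 : ‖c - (c₁ + a)‖ = r := hcirc
    have hub : ‖c - c₁‖ ≤ 2 * (K / n) := by
      have e : c - c₁ = (c - (c₁ + a)) + a := by ring
      calc ‖c - c₁‖ ≤ ‖c - (c₁ + a)‖ + ‖a‖ := by
            rw [e]; exact norm_add_le _ _
        _ = r + K / n := by rw [hcirc0, ha]
        _ ≤ 2 * (K / n) := by linarith
    have hlb : 0 < ‖c - c₁‖ := by
      have e2 : ‖a‖ ≤ ‖c - c₁‖ + ‖c - (c₁ + a)‖ := by
        calc ‖a‖ = ‖(c - c₁) + (-(c - (c₁ + a)))‖ := by congr 1; ring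
          _ ≤ ‖c - c₁‖ + ‖-(c - (c₁ + a))‖ := norm_add_le _ _
          _ = ‖c - c₁‖ + ‖c - (c₁ + a)‖ := by rw [norm_neg]
      rw [ha, hcirc0] at e2
      linarith
    have hcne : c - c₁ ≠ 0 := by
      intro h0
      rw [h0, norm_zero] at hlb
      exact lt_irrefl _ hlb
    have key2 : -(2 * Real.pi * Complex.I) / ((ν : ℂ) ^ 2 * B₀ * (c - c₁)) + n
        = (n:ℂ) * (c - (c₁ + a)) / (c - c₁) := by
      rw [h2pi]
      field_simp
      ring
    rw [key2, norm_div, norm_mul, Complex.norm_natCast, hcirc0]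
    have hid : (n:ℝ) * r / (2 * (K / n)) = K ^ β / 2 * (n:ℝ) ^ ((1:ℝ) - β) := by
      rw [hrr, hKnb, show (1:ℝ) - β = 1 + (-β) by ring, Real.rpow_add hnpos,
        Real.rpow_one, Real.rpow_neg hnpos.le]
      field_simp
    rw [← hid]
    apply div_le_div₀ (by positivity) le_rfl (by positivity) hub
  · -- unique solution
    refine ⟨cs, ⟨?_, ?_⟩, ?_⟩
    · rw [mem_ball, Complex.dist_eq, ← hfix]
      exact hmap cs hcsD
    · exact (hiff cs hcsD).mpr hfix.symm
    · rintro y ⟨hy1, hy2⟩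
      have hyD : y ∈ closedBall (c₁ + a) r := ball_subset_closedBall hy1
      have hyg : y = g y := (hiff y hyD).mp hy2
      have : Function.IsFixedPt G ⟨y, hyD⟩ := by
        apply Subtype.ext
        exact hyg.symm
      have := hGc.fixedPoint_unique this
      exact congrArg Subtype.val this
end
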